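/- arXiv:2503.19729 — 7 statements merged into one kernel-verified Lean document; each statement's English description precedes it below -/
import Mathlib

section
/- Let X be a compact topological space, V a finite-dimensional real vector space of continuous functions f : X → ℝ with basis f_1, ..., f_d, and let γ : X → ℝ^d be given by γ(x) = (f_1(x), ..., f_d(x)). For any closed set A ⊆ X, the origin 0 lies in the convex hull of γ(A) if and only if every f ∈ V changes sign on A (i.e., there exist x, y ∈ A with f(x) ≥ 0 and f(y) ≤ 0). -/
open Set Finset

lemma isCompact_convexHull_aux {E : Type*} [NormedAddCommGroup E] [NormedSpace ℝ E]
    [FiniteDimensional ℝ E] {s : Set E} (hs : IsCompact s) :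
    IsCompact (convexHull ℝ s) := by
  classical
  rcases s.eq_empty_or_nonempty with rfl | ⟨a, ha⟩
  · simp
  set n := Module.finrank ℝ E + 1 with hn
  set T : Set ((Fin n → ℝ) × (Fin n → E)) :=
    (stdSimplex ℝ (Fin n)) ×ˢ (Set.pi Set.univ fun _ : Fin n => s) with hT
  have hTc : IsCompact T :=
    (isCompact_stdSimplex _ _).prod (isCompact_univ_pi fun _ => hs)
  have hφ : Continuous fun p : (Fin n → ℝ) × (Fin n → E) => ∑ i, p.1 i • p.2 i := by
    apply continuous_finset_sum
    intro i _
    exact ((continuous_apply i).comp continuous_fst).smul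
      ((continuous_apply i).comp continuous_snd)
  suffices hh : convexHull ℝ s
      = (fun p : (Fin n → ℝ) × (Fin n → E) => ∑ i, p.1 i • p.2 i) '' T by
    rw [hh]; exact hTc.image hφ
  apply Set.Subset.antisymm
  · intro x hx
    obtain ⟨ι, hfin, z, w, hzs, hai, hwpos, hwsum, hxeq⟩ :=
      eq_pos_convex_span_of_mem_convexHull hx
    have hcard : Fintype.card ι ≤ n := by
      refine hai.card_le_finrank_succ.trans ?_
      exact Nat.add_le_add_right (Submodule.finrank_le _) 1
    obtain ⟨e⟩ : Nonempty (ι ↪ Fin n) := by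
      rw [← Fintype.card_fin n] at hcard
      exact Function.Embedding.nonempty_of_card_le hcard
    set w' : Fin n → ℝ := Function.extend e w 0 with hw'
    set z' : Fin n → E := Function.extend e z (fun _ => a) with hz'
    have hsum : ∀ (g : Fin n → E),
        (∀ j, j ∉ Finset.univ.map e → g j = 0) → ∑ j, g j = ∑ i, g (e i) := by
      intro g hg
      rw [← Finset.sum_subset (Finset.subset_univ (Finset.univ.map e))
        (fun j _ hj => hg j hj), Finset.sum_map]
    have hsumR : ∀ (g : Fin n → ℝ),
        (∀ j, j ∉ Finset.univ.map e → g j = 0) → ∑ j, g j = ∑ i, g (e i) := by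
      intro g hg
      rw [← Finset.sum_subset (Finset.subset_univ (Finset.univ.map e))
        (fun j _ hj => hg j hj), Finset.sum_map]
    have hnotin : ∀ j, j ∉ Finset.univ.map e → w' j = 0 := by
      intro j hj
      rw [hw', Function.extend_apply']
      · rfl
      · rintro ⟨i, rfl⟩
        exact hj (Finset.mem_map.2 ⟨i, Finset.mem_univ i, rfl⟩)
    refine ⟨(w', z'), ⟨⟨?_, ?_⟩, ?_⟩, ?_⟩
    · intro j
      show 0 ≤ w' j
      by_cases hj : ∃ i, e i = j
      · obtain ⟨i, rfl⟩ := hj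
        rw [hw', e.injective.extend_apply]
        exact (hwpos i).le
      · rw [hw', Function.extend_apply' _ _ _ hj]; rfl
    · show ∑ j, w' j = 1
      rw [hsumR _ hnotin]
      simp only [hw', e.injective.extend_apply]
      exact hwsum
    · intro j _
      show z' j ∈ s
      by_cases hj : ∃ i, e i = j
      · obtain ⟨i, rfl⟩ := hj
        rw [hz', e.injective.extend_apply]
        exact hzs ⟨i, rfl⟩
      · rw [hz', Function.extend_apply' _ _ _ hj]
        exact ha
    · show ∑ j, w' j • z' j = x
      rw [hsum _ (fun j hj => by rw [hnotin j hj, zero_smul])]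
      simp only [hw', hz', e.injective.extend_apply]
      exact hxeq
  · rintro _ ⟨⟨w, z⟩, ⟨⟨hw0, hw1⟩, hz⟩, rfl⟩
    exact (convex_convexHull ℝ s).sum_mem (fun i _ => hw0 i) hw1
      (fun i _ => subset_convexHull ℝ s (hz i (Set.mem_univ i)))

/-- Hahn–Banach lemma: `0` is in the convex hull of `γ(A)` iff every function in the
span of `f₁,…,f_d` changes sign on `A`. -/
theorem zero_mem_convexHull_iff_sign_change
    {X : Type*} [TopologicalSpace X] [CompactSpace X]
    (d : ℕ) (f : Fin d → C(X, ℝ)) (hf : LinearIndependent ℝ f)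
    (γ : X → EuclideanSpace ℝ (Fin d))
    (hγ : ∀ x, ∀ i, γ x i = f i x)
    (A : Set X) (hA : IsClosed A) :
    (0 ∈ convexHull ℝ (γ '' A)) ↔
      ∀ g ∈ Submodule.span ℝ (Set.range f),
        (∃ x ∈ A, 0 ≤ g x) ∧ (∃ y ∈ A, g y ≤ 0) := by
  have hγc : Continuous γ := by
    refine (PiLp.continuous_toLp 2 _).comp (continuous_pi (f := fun x => (γ x).ofLp) fun i => ?_)
    revert i
    intro i
    have : (fun x => γ x i) = fun x => f i x := funext fun x => hγ x i
    rw [this]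
    exact (f i).continuous
  constructor
  · intro h0 g hg
    obtain ⟨c, hc⟩ := (Submodule.mem_span_range_iff_exists_fun ℝ).1 hg
    set L : EuclideanSpace ℝ (Fin d) →ₗ[ℝ] ℝ :=
      ∑ i, c i • ((EuclideanSpace.proj i : EuclideanSpace ℝ (Fin d) →L[ℝ] ℝ) : EuclideanSpace ℝ (Fin d) →ₗ[ℝ] ℝ) with hL
    have hLv : ∀ v : EuclideanSpace ℝ (Fin d), L v = ∑ i, c i * v i := by
      intro v
      simp only [hL, LinearMap.sum_apply, LinearMap.smul_apply, LinearMap.proj_apply, smul_eq_mul]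
      rfl
    have hgx : ∀ x, g x = L (γ x) := by
      intro x
      rw [hLv]
      have := congrArg (fun h : C(X, ℝ) => h x) hc
      simp at this
      rw [← this]
      congr 1
      ext i
      rw [hγ]
    constructor
    · by_contra hcon
      push_neg at hcon
      have hconv : Convex ℝ {v : EuclideanSpace ℝ (Fin d) | L v < 0} :=
        convex_halfSpace_lt L.isLinear 0
      have hsub : γ '' A ⊆ {v | L v < 0} := by
        rintro _ ⟨x, hx, rfl⟩
        have := hcon x hx
        rw [hgx] at this
        exact this
      have := convexHull_min hsub hconv h0
      simp at this
    · by_contra hcon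
      push_neg at hcon
      have hconv : Convex ℝ {v : EuclideanSpace ℝ (Fin d) | 0 < L v} :=
        convex_halfSpace_gt L.isLinear 0
      have hsub : γ '' A ⊆ {v | 0 < L v} := by
        rintro _ ⟨x, hx, rfl⟩
        have := hcon x hx
        rw [hgx] at this
        exact this
      have := convexHull_min hsub hconv h0
      simp at this
  · intro h
    by_contra h0
    rcases A.eq_empty_or_nonempty with rfl | ⟨a, ha⟩
    · obtain ⟨⟨x, hx, _⟩, _⟩ := h 0 (Submodule.zero_mem _)
      exact hx
    · have hcomp : IsCompact (convexHull ℝ (γ '' A)) :=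
        isCompact_convexHull_aux ((hA.isCompact).image hγc)
      obtain ⟨L, u, hLu, hub⟩ :=
        geometric_hahn_banach_point_closed (convex_convexHull ℝ _) hcomp.isClosed h0
      have hu : (0:ℝ) < u := by simpa using hLu
      set c : Fin d → ℝ := fun i => L (EuclideanSpace.single i 1) with hcdef
      set g : C(X, ℝ) := ∑ i, c i • f i with hg
      have hLv : ∀ v : EuclideanSpace ℝ (Fin d), L v = ∑ i, v i * c i := by
        intro v
        have hv : ∑ i, v i • EuclideanSpace.single i (1:ℝ) = v := by
          have h2 := (EuclideanSpace.basisFun (Fin d) ℝ).sum_repr v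
          simpa [EuclideanSpace.basisFun_apply, EuclideanSpace.basisFun_repr] using h2
        conv_lhs => rw [← hv]
        rw [map_sum]
        simp [hcdef, mul_comm]
      have hgx : ∀ x, g x = L (γ x) := by
        intro x
        rw [hLv, hg]
        simp [hγ, mul_comm]
      have hgmem : g ∈ Submodule.span ℝ (Set.range f) := by
        rw [hg]
        exact Submodule.sum_mem _ fun i _ =>
          Submodule.smul_mem _ _ (Submodule.subset_span ⟨i, rfl⟩)
      obtain ⟨_, y, hy, hgy⟩ := h g hgmem
      have : u < L (γ y) := hub _ (subset_convexHull ℝ _ ⟨y, hy, rfl⟩)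
      rw [← hgx] at this
      linarith
end

section
/- Let X be a topological space with a probability measure μ, and let V be a finite-dimensional vector space of continuous functions X → ℝ containing all constant functions. Let A ⊆ X be closed. Then every f ∈ V with ∫_X f dμ = 0 changes sign on A if and only if there is a finitely supported function w : A → [0,1] such that ∫_X g dμ = Σ_{a ∈ A} w(a) g(a) for every g ∈ V. -/
open MeasureTheory Set

lemma sum_pad_aux {M : Type*} [AddCommMonoid M] {k m : ℕ} (hkm : k ≤ m) (F : ℕ → M)
    (hF : ∀ j, k ≤ j → F j = 0) :
    ∑ j : Fin m, F (j : ℕ) = ∑ j : Fin k, F (j : ℕ) := by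
  rw [Fin.sum_univ_eq_sum_range, Fin.sum_univ_eq_sum_range]
  exact (Finset.sum_subset (Finset.range_subset_range.2 hkm)
    (fun j _ hj' => hF j (by simpa using hj'))).symm

lemma convexHull_eq_image_fd {E : Type*} [NormedAddCommGroup E] [NormedSpace ℝ E]
    [FiniteDimensional ℝ E] (K : Set E) :
    convexHull ℝ K =
      (fun p : (Fin (Module.finrank ℝ E + 1) → ℝ) × (Fin (Module.finrank ℝ E + 1) → E) =>
        ∑ i, p.1 i • p.2 i) ''
        (stdSimplex ℝ (Fin (Module.finrank ℝ E + 1)) ×ˢ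
          Set.univ.pi fun _ : Fin (Module.finrank ℝ E + 1) => K) := by
  classical
  set m := Module.finrank ℝ E + 1 with hm
  apply Subset.antisymm
  · intro x hx
    rw [convexHull_eq_union] at hx
    simp only [Set.mem_iUnion] at hx
    obtain ⟨t, hts, hai, hxt⟩ := hx
    rw [Finset.convexHull_eq] at hxt
    obtain ⟨w, hw0, hw1, hwx⟩ := hxt
    have htne : t.Nonempty := by
      rcases Finset.eq_empty_or_nonempty t with rfl | h
      · simp at hw1
      · exact h
    obtain ⟨c, hc⟩ := htne
    have hkm : t.card ≤ m := by
      have h1 := hai.card_le_finrank_succ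
      have h2 : Module.finrank ℝ (vectorSpan ℝ (Set.range ((↑) : t → E))) ≤ Module.finrank ℝ E :=
        Submodule.finrank_le _
    -- combine
      simpa [Fintype.card_coe, hm] using h1.trans (by omega)
    set k := t.card with hk
    set e : Fin k ≃ t := t.equivFin.symm with he
    set wa : ℕ → ℝ := fun j => if h : j < k then w (e ⟨j, h⟩) else 0 with hwa
    set za : ℕ → E := fun j => if h : j < k then (e ⟨j, h⟩ : E) else c with hza
    refine ⟨(fun j : Fin m => wa j, fun j : Fin m => za j), ⟨?_, ?_⟩, ?_⟩
    · constructor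
      · intro j
        rw [hwa]
        dsimp only
        split
        · exact hw0 _ (e _).2
        · exact le_refl 0
      · have h1 : ∑ j : Fin m, wa (j : ℕ) = ∑ j : Fin k, wa (j : ℕ) :=
          sum_pad_aux hkm wa (fun j hj => by simp [hwa, Nat.not_lt.2 hj])
        have h2 : ∑ j : Fin k, wa (j : ℕ) = ∑ y : t, w y := by
          rw [← Equiv.sum_comp e (fun y : t => w y)]
          refine Finset.sum_congr rfl fun j _ => ?_
          simp [hwa, j.isLt]
        rw [h1, h2, Finset.sum_coe_sort t w, hw1]
    · intro j _
      rw [hza]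
      dsimp only
      split
      · exact hts (e _).2
      · exact hts hc
    · dsimp only
      have h1 : ∑ j : Fin m, wa (j : ℕ) • za (j : ℕ) = ∑ j : Fin k, wa (j : ℕ) • za (j : ℕ) :=
        sum_pad_aux hkm (fun j => wa j • za j)
          (fun j hj => by simp [hwa, Nat.not_lt.2 hj])
      have h2 : ∑ j : Fin k, wa (j : ℕ) • za (j : ℕ) = ∑ y : t, w y • (y : E) := by
        rw [← Equiv.sum_comp e (fun y : t => w y • (y : E))]
        refine Finset.sum_congr rfl fun j _ => ?_
        simp [hwa, hza, j.isLt]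
      rw [h1, h2, Finset.sum_coe_sort t (fun y => w y • y)]
      rw [Finset.centerMass_eq_of_sum_1 _ _ hw1] at hwx
      simpa using hwx
  · rintro x ⟨⟨w, z⟩, ⟨hw, hz⟩, rfl⟩
    exact (convex_convexHull ℝ K).sum_mem (fun i _ => hw.1 i) hw.2
      (fun i _ => subset_convexHull ℝ K (hz i (Set.mem_univ i)))

lemma isClosed_convexHull_fd {E : Type*} [NormedAddCommGroup E] [NormedSpace ℝ E]
    [FiniteDimensional ℝ E] {K : Set E} (hK : IsCompact K) :
    IsClosed (convexHull ℝ K) := by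
  rw [convexHull_eq_image_fd K]
  refine IsCompact.isClosed (IsCompact.image (IsCompact.prod (isCompact_stdSimplex _ _)
    (isCompact_univ_pi fun _ => hK)) ?_)
  exact continuous_finset_sum _ fun i _ =>
    (((continuous_apply i).comp continuous_fst).smul ((continuous_apply i).comp continuous_snd))


/-- Sign changes on `A` of all zero-mean functions in `V` are equivalent to the
existence of a cubature rule supported on `A`. -/
theorem sign_change_iff_cubature
    {X : Type*} [MetricSpace X] [CompactSpace X] [MeasurableSpace X]
    [BorelSpace X] (μ : Measure X) [IsProbabilityMeasure μ]
    (V : Submodule ℝ C(X, ℝ)) (hV : FiniteDimensional ℝ V)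
    (hconst : ∀ c : ℝ, (ContinuousMap.const X c) ∈ V)
    (A : Set X) (hA : IsClosed A) :
    (∀ f ∈ V, ∫ x, f x ∂μ = 0 → (∃ x ∈ A, 0 ≤ f x) ∧ (∃ y ∈ A, f y ≤ 0)) ↔
      (∃ (s : Finset X) (w : X → ℝ), ↑s ⊆ A ∧ (∀ x, 0 ≤ w x ∧ w x ≤ 1) ∧
        ∀ g ∈ V, ∫ x, g x ∂μ = ∑ a ∈ s, w a * g a) := by
  classical
  have hint : ∀ g : C(X, ℝ), Integrable (fun x => g x) μ := by
    intro g
    have := (g.continuous.locallyIntegrable (μ := μ)).integrableOn_isCompact isCompact_univ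
    rwa [integrableOn_univ] at this
  have hintc : ∀ c : ℝ, ∫ x, (ContinuousMap.const X c) x ∂μ = c := by
    intro c
    simp [integral_const]
  constructor
  · intro h
    -- setup
    set n := Module.finrank ℝ V with hn
    set b : Module.Basis (Fin n) ℝ V := Module.finBasis ℝ V with hb
    set Φ : X → (Fin n → ℝ) := fun x i => (b i : C(X, ℝ)) x with hΦ
    set L : Fin n → ℝ := fun i => ∫ x, (b i : C(X, ℝ)) x ∂μ with hL
    have hΦc : Continuous Φ := continuous_pi fun i => (b i : C(X, ℝ)).continuous
    -- evaluation and integral of linear combinations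
    have heval : ∀ (c : Fin n → ℝ) (x : X),
        ((∑ i, c i • b i : V) : C(X, ℝ)) x = ∑ i, c i * (b i : C(X, ℝ)) x := by
      intro c x
      have hco : ((∑ i, c i • b i : V) : C(X, ℝ)) = ∑ i, c i • (b i : C(X, ℝ)) := by
        rw [show ((∑ i, c i • b i : V) : C(X, ℝ)) = V.subtype (∑ i, c i • b i) from rfl,
          map_sum]
        simp
      rw [hco, ContinuousMap.sum_apply]
      simp [smul_eq_mul]
    have hintlin : ∀ c : Fin n → ℝ,
        ∫ x, ((∑ i, c i • b i : V) : C(X, ℝ)) x ∂μ = ∑ i, c i * L i := by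
      intro c
      have : ∫ x, ((∑ i, c i • b i : V) : C(X, ℝ)) x ∂μ
          = ∫ x, ∑ i, c i * (b i : C(X, ℝ)) x ∂μ := by
        refine integral_congr_ae (Filter.Eventually.of_forall fun x => heval c x)
      rw [this, integral_finset_sum]
      · refine Finset.sum_congr rfl fun i _ => ?_
        rw [integral_const_mul]
      · exact fun i _ => (hint (b i)).const_mul _
    -- the key claim
    have hmem : L ∈ convexHull ℝ (Φ '' A) := by
      by_contra hLmem
      have hcomp : IsCompact (Φ '' A) := (hA.isCompact).image hΦc
      obtain ⟨ℓ, u, hsep, hu⟩ := geometric_hahn_banach_closed_point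
        (convex_convexHull ℝ _) (isClosed_convexHull_fd hcomp) hLmem
      set c : Fin n → ℝ := fun i => ℓ (fun j => if i = j then 1 else 0) with hc
      have hℓ : ∀ v : Fin n → ℝ, ℓ v = ∑ i, v i * c i := by
        intro v
        have := LinearMap.pi_apply_eq_sum_univ (ℓ : (Fin n → ℝ) →ₗ[ℝ] ℝ) v
        simpa [smul_eq_mul, hc] using this
      set fV : V := ∑ i, c i • b i with hfV
      have hfint : ∫ x, (fV : C(X, ℝ)) x ∂μ = ℓ L := by
        rw [hintlin c, hℓ L]
        exact Finset.sum_congr rfl fun i _ => mul_comm _ _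
      have hfeval : ∀ x : X, (fV : C(X, ℝ)) x = ℓ (Φ x) := by
        intro x
        rw [heval c x, hℓ (Φ x)]
        exact Finset.sum_congr rfl fun i _ => mul_comm _ _
      -- build the zero-mean function
      set gC : C(X, ℝ) := (fV : C(X, ℝ)) - ContinuousMap.const X (ℓ L) with hgC
      have hgmem : gC ∈ V := sub_mem fV.2 (hconst _)
      have hgint : ∫ x, gC x ∂μ = 0 := by
        have : ∫ x, gC x ∂μ = ∫ x, (fV : C(X, ℝ)) x ∂μ
            - ∫ x, (ContinuousMap.const X (ℓ L)) x ∂μ := by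
          rw [← integral_sub (hint _) (hint _)]
          rfl
        rw [this, hfint, hintc]
        ring
      obtain ⟨x, hxA, hx⟩ := (h gC hgmem hgint).1
      have h1 : ℓ (Φ x) < u :=
        hsep (Φ x) (subset_convexHull ℝ _ (Set.mem_image_of_mem Φ hxA))
      have h2 : gC x = ℓ (Φ x) - ℓ L := by
        simp [hgC, hfeval x]
      rw [h2] at hx
      linarith
    -- extract cubature rule
    rw [convexHull_eq_image_fd] at hmem
    obtain ⟨⟨wv, zv⟩, ⟨hwv, hzv⟩, hsum⟩ := hmem
    dsimp only at hwv hzv hsum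
    have hav : ∀ j, ∃ x, x ∈ A ∧ Φ x = zv j := by
      intro j
      have := hzv j (Set.mem_univ j)
      simpa [Set.mem_image] using this
    choose a haA haΦ using hav
    refine ⟨Finset.univ.image a,
      fun x => ∑ j ∈ Finset.univ.filter (fun j => a j = x), wv j, ?_, ?_, ?_⟩
    · intro x hx
      simp only [Finset.coe_image, Set.mem_image] at hx
      obtain ⟨j, _, rfl⟩ := hx
      exact haA j
    · intro x
      constructor
      · exact Finset.sum_nonneg fun j _ => hwv.1 j
      · calc ∑ j ∈ Finset.univ.filter (fun j => a j = x), wv j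
            ≤ ∑ j, wv j := Finset.sum_le_sum_of_subset_of_nonneg
              (Finset.filter_subset _ _) (fun j _ _ => hwv.1 j)
          _ = 1 := hwv.2
    · intro g hg
      -- key moment identities
      have hkey : ∀ i : Fin n, ∑ j, wv j * (b i : C(X, ℝ)) (a j) = L i := by
        intro i
        have := congrFun hsum i
        simp only [Finset.sum_apply, Pi.smul_apply, smul_eq_mul] at this
        rw [← this]
        refine Finset.sum_congr rfl fun j _ => ?_
        rw [← haΦ j]
      set cg : Fin n → ℝ := fun i => b.repr ⟨g, hg⟩ i with hcg
      have hgrepr : g = ((∑ i, cg i • b i : V) : C(X, ℝ)) := by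
        have : (∑ i, cg i • b i : V) = ⟨g, hg⟩ := b.sum_repr ⟨g, hg⟩
        rw [this]
      have hfiber : ∑ x ∈ Finset.univ.image a,
          (∑ j ∈ Finset.univ.filter (fun j => a j = x), wv j) * g x
          = ∑ j, wv j * g (a j) := by
        rw [← Finset.sum_fiberwise_of_maps_to
          (fun j (_ : j ∈ Finset.univ) => Finset.mem_image_of_mem a (Finset.mem_univ j))
          (fun j => wv j * g (a j))]
        refine Finset.sum_congr rfl fun x _ => ?_
        rw [Finset.sum_mul]
        refine Finset.sum_congr rfl fun j hj => ?_
        rw [(Finset.mem_filter.1 hj).2]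
      rw [hfiber]
      conv_lhs => rw [hgrepr]
      rw [hintlin cg]
      have : ∀ j, g (a j) = ∑ i, cg i * (b i : C(X, ℝ)) (a j) := fun j => by
        conv_lhs => rw [hgrepr]
        exact heval cg (a j)
      calc ∑ i, cg i * L i
          = ∑ i, cg i * ∑ j, wv j * (b i : C(X, ℝ)) (a j) := by
            refine Finset.sum_congr rfl fun i _ => by rw [hkey i]
        _ = ∑ j, wv j * g (a j) := by
            simp_rw [this, Finset.mul_sum]
            rw [Finset.sum_comm]
            refine Finset.sum_congr rfl fun j _ => Finset.sum_congr rfl fun i _ => by ring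
  · rintro ⟨s, w, hsA, hw, hrule⟩ f hf hfint
    have hone : ∑ a ∈ s, w a * (ContinuousMap.const X (1:ℝ)) a = 1 := by
      rw [← hrule _ (hconst 1), hintc]
    have hsumw : ∑ a ∈ s, w a = 1 := by
      simpa using hone
    have hfz : ∑ a ∈ s, w a * f a = 0 := by rw [← hrule f hf, hfint]
    have hex : ∃ a ∈ s, 0 < w a := by
      by_contra hne
      push_neg at hne
      have : ∑ a ∈ s, w a = 0 :=
        Finset.sum_eq_zero fun a ha => le_antisymm (hne a ha) (hw a).1
      rw [this] at hsumw
      exact zero_ne_one hsumw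
    obtain ⟨a0, ha0s, ha0⟩ := hex
    constructor
    · by_contra hno
      push_neg at hno
      have hlt : ∑ a ∈ s, w a * f a < ∑ a ∈ s, (0:ℝ) := by
        refine Finset.sum_lt_sum (fun a ha => ?_) ⟨a0, ha0s, ?_⟩
        · exact mul_nonpos_of_nonneg_of_nonpos (hw a).1 (hno a (hsA ha)).le
        · exact mul_neg_of_pos_of_neg ha0 (hno a0 (hsA ha0s))
      simp [hfz] at hlt
    · by_contra hno
      push_neg at hno
      have hlt : ∑ a ∈ s, (0:ℝ) < ∑ a ∈ s, w a * f a := by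
        refine Finset.sum_lt_sum (fun a ha => ?_) ⟨a0, ha0s, ?_⟩
        · exact mul_nonneg (hw a).1 (hno a (hsA ha)).le
        · exact mul_pos ha0 (hno a0 (hsA ha0s))
      simp [hfz] at hlt
end

section
/- If in the setting of the previous equivalence every zero-mean f ∈ V changes sign on a closed set A, then the weight function w can be chosen supported on at most n+1 points of A, where n+1 = dim V (i.e., n is the dimension of the subspace of zero-mean functions in V). -/
open MeasureTheory

lemma my_isCompact_convexHull {E : Type*} [NormedAddCommGroup E] [NormedSpace ℝ E]
    [FiniteDimensional ℝ E] {K : Set E} (hK : IsCompact K) :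
    IsCompact (convexHull ℝ K) := by
  classical
  rcases K.eq_empty_or_nonempty with rfl | ⟨k₀, hk₀⟩
  · simp
  set d := Module.finrank ℝ E with hd
  have hS : IsCompact ((stdSimplex ℝ (Fin (d+1))) ×ˢ (Set.univ.pi fun _ : Fin (d+1) => K)) :=
    IsCompact.prod (isCompact_stdSimplex ℝ (Fin (d+1))) (isCompact_univ_pi fun _ => hK)
  have hcont : Continuous fun p : (Fin (d+1) → ℝ) × (Fin (d+1) → E) => ∑ i, p.1 i • p.2 i :=
    continuous_finset_sum _ fun i _ =>
      ((continuous_apply i).comp continuous_fst).smul ((continuous_apply i).comp continuous_snd)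
  have himage : (fun p : (Fin (d+1) → ℝ) × (Fin (d+1) → E) => ∑ i, p.1 i • p.2 i) ''
      ((stdSimplex ℝ (Fin (d+1))) ×ˢ (Set.univ.pi fun _ : Fin (d+1) => K)) = convexHull ℝ K := by
    apply Set.Subset.antisymm
    · rintro x ⟨⟨wt, z⟩, ⟨hw, hz⟩, rfl⟩
      exact (convex_convexHull ℝ K).sum_mem (fun i _ => hw.1 i) hw.2
        (fun i _ => subset_convexHull ℝ K (hz i (Set.mem_univ i)))
    · intro x hx
      obtain ⟨ι, hfin, z, wt, hzK, hindep, hwpos, hwsum, hxeq⟩ :=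
        eq_pos_convex_span_of_mem_convexHull hx
      have hcard : Fintype.card ι ≤ d + 1 := by
        refine le_trans hindep.card_le_finrank_succ ?_
        exact Nat.add_le_add_right (Submodule.finrank_le _) 1
      obtain ⟨e⟩ : Nonempty (ι ↪ Fin (d+1)) := by
        rw [Function.Embedding.nonempty_iff_card_le]
        simpa using hcard
      set wt' : Fin (d+1) → ℝ := fun j => if h : ∃ i, e i = j then wt h.choose else 0 with hwt'
      set z' : Fin (d+1) → E := fun j => if h : ∃ i, e i = j then z h.choose else k₀ with hz'
      have hat : ∀ i, wt' (e i) = wt i ∧ z' (e i) = z i := by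
        intro i
        have h : ∃ i', e i' = e i := ⟨i, rfl⟩
        have hh : h.choose = i := e.injective h.choose_spec
        constructor
        · rw [hwt']; simp only [dif_pos h, hh]
        · rw [hz']; simp only [dif_pos h, hh]
      have hzero : ∀ j ∉ Finset.univ.image e, wt' j = 0 := by
        intro j hj
        rw [hwt']
        have : ¬ ∃ i, e i = j := by
          rintro ⟨i, rfl⟩; exact hj (Finset.mem_image_of_mem e (Finset.mem_univ i))
        simp only [dif_neg this]
      have hsum1 : ∑ j, wt' j = 1 := by
        rw [← Finset.sum_subset (Finset.subset_univ (Finset.univ.image e))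
          (fun j _ hj => hzero j hj)]
        rw [Finset.sum_image (fun a _ b _ h => e.injective h)]
        simp only [fun i => (hat i).1]
        exact hwsum
      have hsum2 : ∑ j, wt' j • z' j = x := by
        rw [← Finset.sum_subset (Finset.subset_univ (Finset.univ.image e))
          (fun j _ hj => by rw [hzero j hj, zero_smul])]
        rw [Finset.sum_image (fun a _ b _ h => e.injective h)]
        simp only [fun i => (hat i).1, fun i => (hat i).2]
        exact hxeq
      refine ⟨⟨wt', z'⟩, ⟨⟨?_, hsum1⟩, ?_⟩, hsum2⟩
      · intro j
        rw [hwt']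
        by_cases h : ∃ i, e i = j
        · simp only [dif_pos h]; exact (hwpos _).le
        · simp only [dif_neg h]; exact le_refl 0
      · intro j _
        rw [hz']
        by_cases h : ∃ i, e i = j
        · simp only [dif_pos h]
          exact hzK (Set.mem_range_self _)
        · simp only [dif_neg h]; exact hk₀
  rw [← himage]
  exact hS.image hcont

set_option maxHeartbeats 1000000 in
set_option synthInstance.maxHeartbeats 400000 in
/-- If every zero-mean function in the `(n+1)`-dimensional space `V` changes sign on
the closed set `A`, then a cubature rule supported on at most `n+1` points of `A`
exists. -/
theorem cubature_support_card
    {X : Type*} [MetricSpace X] [CompactSpace X] [MeasurableSpace X]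
    [BorelSpace X] (μ : Measure X) [IsProbabilityMeasure μ]
    (n : ℕ) (V : Submodule ℝ C(X, ℝ))
    (hdim : Module.finrank ℝ V = n + 1)
    (hconst : ∀ c : ℝ, (ContinuousMap.const X c) ∈ V)
    (A : Set X) (hA : IsClosed A)
    (hsign : ∀ f ∈ V, ∫ x, f x ∂μ = 0 → (∃ x ∈ A, 0 ≤ f x) ∧ (∃ y ∈ A, f y ≤ 0)) :
    ∃ (s : Finset X) (w : X → ℝ), ↑s ⊆ A ∧ s.card ≤ n + 1 ∧
      (∀ x, 0 ≤ w x ∧ w x ≤ 1) ∧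
      ∀ g ∈ V, ∫ x, g x ∂μ = ∑ a ∈ s, w a * g a := by
  classical
  have hint : ∀ f : C(X, ℝ), Integrable (fun x => f x) μ := fun f =>
    f.continuous.integrable_of_hasCompactSupport
      (IsCompact.of_isClosed_subset isCompact_univ (isClosed_tsupport _) (Set.subset_univ _))
  -- the integration linear functional
  let I : C(X, ℝ) →ₗ[ℝ] ℝ :=
    { toFun := fun f => ∫ x, f x ∂μ
      map_add' := fun f g => by
        simp only [ContinuousMap.add_apply]
        exact integral_add (hint f) (hint g)
      map_smul' := fun c f => by
        simp only [ContinuousMap.smul_apply, smul_eq_mul, RingHom.id_apply]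
        exact integral_const_mul c _ }
  have hI : ∀ f : C(X, ℝ), I f = ∫ x, f x ∂μ := fun f => rfl
  set W : Submodule ℝ C(X, ℝ) := V ⊓ LinearMap.ker I with hW
  have hWV : W ≤ V := inf_le_left
  haveI : FiniteDimensional ℝ V := FiniteDimensional.of_finrank_pos (by omega)
  have equivW : (W.comap V.subtype) ≃ₗ[ℝ] W := Submodule.comapSubtypeEquivOfLe hWV
  haveI : FiniteDimensional ℝ W := Module.Finite.equiv equivW
  have hone : (ContinuousMap.const X (1:ℝ)) ∉ W := by
    intro h
    have h2 : I (ContinuousMap.const X (1:ℝ)) = 0 :=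
      LinearMap.mem_ker.mp (Submodule.mem_inf.mp h).2
    rw [hI] at h2
    simp [ContinuousMap.const_apply] at h2
  have hmn : Module.finrank ℝ W ≤ n := by
    have hlt : Module.finrank ℝ (W.comap V.subtype) < Module.finrank ℝ V := by
      apply Submodule.finrank_lt
      intro htop
      exact hone (Submodule.mem_comap.mp (htop ▸ Submodule.mem_top :
        (⟨_, hconst 1⟩ : V) ∈ W.comap V.subtype))
    have heq : Module.finrank ℝ (W.comap V.subtype) = Module.finrank ℝ W :=
      equivW.finrank_eq
    omega
  set m := Module.finrank ℝ W with hm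
  let b : Module.Basis (Fin m) ℝ W := Module.finBasis ℝ W
  set γ : X → (Fin m → ℝ) := fun x k => (b k : C(X, ℝ)) x with hγ
  have hγcont : Continuous γ := continuous_pi fun k => (b k : C(X, ℝ)).continuous
  set K : Set (Fin m → ℝ) := γ '' A with hK
  have hKcomp : IsCompact K := (hA.isCompact).image hγcont
  -- 0 is in the convex hull of γ '' A
  have h0 : (0 : Fin m → ℝ) ∈ convexHull ℝ K := by
    by_contra h0
    have hclosed : IsClosed (convexHull ℝ K) := (my_isCompact_convexHull hKcomp).isClosed
    obtain ⟨φ, u, hφ, hu⟩ :=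
      geometric_hahn_banach_closed_point (convex_convexHull ℝ K) hclosed h0
    have hu0 : u < 0 := by simpa using hu
    set fW : W := ∑ k, φ (Pi.single k 1) • b k with hfWdef
    have hfW : ∀ x, ((fW : C(X, ℝ)) x) = φ (γ x) := by
      intro x
      have h1 : φ (γ x) = ∑ k, γ x k * φ (Pi.single k 1) := by
        conv_lhs => rw [pi_eq_sum_univ (γ x)]
        rw [map_sum]
        refine Finset.sum_congr rfl fun k _ => ?_
        have hsingle : (fun j => if k = j then (1:ℝ) else 0) = Pi.single k 1 :=
          funext fun j => by rw [Pi.single_apply]; simp [eq_comm]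
        rw [_root_.map_smul, smul_eq_mul, hsingle]
      rw [h1, hfWdef]
      rw [Submodule.coe_sum]
      rw [ContinuousMap.sum_apply]
      refine Finset.sum_congr rfl fun k _ => ?_
      rw [Submodule.coe_smul, ContinuousMap.smul_apply, smul_eq_mul, mul_comm]
    have hfV : (fW : C(X, ℝ)) ∈ V := hWV fW.2
    have hfint : ∫ x, (fW : C(X, ℝ)) x ∂μ = 0 := by
      have h2 : I (fW : C(X, ℝ)) = 0 :=
        LinearMap.mem_ker.mp (Submodule.mem_inf.mp fW.2).2
      rwa [hI] at h2
    obtain ⟨⟨x, hxA, hx⟩, -⟩ := hsign _ hfV hfint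
    have hlt := hφ (γ x) (subset_convexHull ℝ K ⟨x, hxA, rfl⟩)
    rw [← hfW x] at hlt
    linarith
  obtain ⟨ι, hfin, z, wt, hzK, hindep, hwpos, hwsum, hzero⟩ :=
    eq_pos_convex_span_of_mem_convexHull h0
  have hcard : Fintype.card ι ≤ n + 1 := by
    have h1 : Fintype.card ι ≤ Module.finrank ℝ (vectorSpan ℝ (Set.range z)) + 1 :=
      hindep.card_le_finrank_succ
    have h2 : Module.finrank ℝ (vectorSpan ℝ (Set.range z)) ≤ m := by
      have := Submodule.finrank_le (vectorSpan ℝ (Set.range z))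
      simpa [Module.finrank_pi] using this
    omega
  have hz' : ∀ i, ∃ x, x ∈ A ∧ γ x = z i := fun i => hzK (Set.mem_range_self i)
  choose a haA haγ using hz'
  have hzinj : Function.Injective z := hindep.injective
  have hainj : Function.Injective a := fun i j h => hzinj (by rw [← haγ, ← haγ, h])
  refine ⟨Finset.univ.image a, fun x => if h : ∃ i, a i = x then wt h.choose else 0, ?_, ?_, ?_, ?_⟩
  · intro x hx
    simp only [Finset.coe_image, Set.mem_image] at hx
    obtain ⟨i, -, rfl⟩ := hx
    exact haA i
  · rw [Finset.card_image_of_injective _ hainj]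
    simpa using hcard
  · intro x
    by_cases h : ∃ i, a i = x
    · simp only [dif_pos h]
      refine ⟨(hwpos _).le, ?_⟩
      rw [← hwsum]
      exact Finset.single_le_sum (fun i _ => (hwpos i).le) (Finset.mem_univ _)
    · simp only [dif_neg h]
      exact ⟨le_refl 0, zero_le_one⟩
  · intro g hg
    set c := ∫ x, g x ∂μ with hc
    set f : C(X, ℝ) := g - ContinuousMap.const X c with hf
    have hfV : f ∈ V := V.sub_mem hg (hconst c)
    have hfint : ∫ x, f x ∂μ = 0 := by
      rw [hf]
      simp only [ContinuousMap.sub_apply, ContinuousMap.const_apply]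
      rw [integral_sub (hint g) (integrable_const c)]
      simp [hc]
    have hfmem : f ∈ W := Submodule.mem_inf.mpr
      ⟨hfV, LinearMap.mem_ker.mpr (by rw [hI]; exact hfint)⟩
    set fW : W := ⟨f, hfmem⟩ with hfWdef
    have hfx : ∀ x, f x = ∑ k, b.repr fW k * γ x k := by
      intro x
      have h1 : (fW : C(X, ℝ)) = ∑ k, b.repr fW k • (b k : C(X, ℝ)) := by
        conv_lhs => rw [← b.sum_repr fW]
        rw [Submodule.coe_sum]
        exact Finset.sum_congr rfl fun k _ => by rw [Submodule.coe_smul]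
      have h2 : f x = (fW : C(X, ℝ)) x := rfl
      rw [h2, h1, ContinuousMap.sum_apply]
      exact Finset.sum_congr rfl fun k _ => by
        rw [ContinuousMap.smul_apply, smul_eq_mul]
    have hwa : ∀ i, (if h : ∃ j, a j = a i then wt h.choose else 0) = wt i := by
      intro i
      have h : ∃ j, a j = a i := ⟨i, rfl⟩
      rw [dif_pos h, hainj h.choose_spec]
    rw [Finset.sum_image (fun i _ j _ h => hainj h)]
    have hsum : ∀ i ∈ Finset.univ, (if h : ∃ j, a j = a i then wt h.choose else 0) * g (a i)
        = wt i * (f (a i) + c) := by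
      intro i _
      rw [hwa i]
      have hgf : f (a i) + c = g (a i) := by simp [hf]
      rw [hgf]
    rw [Finset.sum_congr rfl hsum]
    have hzerok : ∀ k, ∑ i, wt i * z i k = 0 := by
      intro k
      have := congrFun hzero k
      rw [Finset.sum_apply] at this
      simpa [Pi.smul_apply, smul_eq_mul] using this
    have hfsum : ∑ i, wt i * f (a i) = 0 := by
      have : ∀ i, wt i * f (a i) = ∑ k, b.repr fW k * (wt i * z i k) := by
        intro i
        rw [hfx (a i), Finset.mul_sum]
        exact Finset.sum_congr rfl fun k _ => by rw [haγ]; ring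
      rw [Finset.sum_congr rfl (fun i _ => this i), Finset.sum_comm]
      simp only [← Finset.mul_sum, hzerok, mul_zero, Finset.sum_const_zero]
    calc c = ∑ i, wt i * f (a i) + (∑ i, wt i) * c := by rw [hfsum, hwsum]; ring
    _ = ∑ i, wt i * (f (a i) + c) := by
      rw [Finset.sum_mul, ← Finset.sum_add_distrib]
      exact Finset.sum_congr rfl fun i _ => by ring
end

section
/- Let n ≥ 1 be an integer and p ≥ 2 a prime. In the flat n-torus (ℝ/ℤ)^n with the quotient of the Euclidean ℓ²-metric, consider the grid L = {(k_1/p, ..., k_n/p) : k_i ∈ {0,...,p-1}} of p^n points. Then for every x ∈ L, the set L \ {x} is contained in a closed geodesic ball of radius r = sqrt((n-1)/4 + ((p-2)/(2p))²). -/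
lemma coord_half (u v : AddCircle (1:ℝ)) : dist u v ≤ 1/2 := by
  rw [dist_eq_norm]
  have := AddCircle.norm_le_half_period (p := (1:ℝ)) (x := u - v) one_ne_zero
  simpa using this

lemma norm_rep {p : ℕ} (hp : 2 ≤ p) {e : ℤ} (h1 : 1 ≤ e) (h2 : e ≤ (p : ℤ) - 1) :
    ‖(((e : ℝ) / p - 1/2 : ℝ) : AddCircle (1:ℝ))‖ ≤ ((p : ℝ) - 2) / (2 * p) := by
  have hp0 : (0:ℝ) < p := by positivity
  have h1' : (1:ℝ) ≤ (e:ℝ) := by exact_mod_cast h1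
  have h2' : (e:ℝ) ≤ (p:ℝ) - 1 := by exact_mod_cast h2
  have hA : (e:ℝ)/p - 1/2 = (2*e - p)/(2*p) := by field_simp
  have habs : |(e : ℝ) / p - 1/2| ≤ ((p : ℝ) - 2) / (2 * p) := by
    rw [hA, abs_div, abs_of_pos (by positivity : (0:ℝ) < 2*p),
      div_le_div_iff_of_pos_right (by positivity : (0:ℝ) < 2*p), abs_le]
    constructor <;> linarith
  have hhalf : |(e : ℝ) / p - 1/2| ≤ |(1:ℝ)| / 2 := by
    rw [abs_one]
    refine habs.trans ?_
    rw [div_le_div_iff₀ (by positivity) (by norm_num)]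
    nlinarith
  rw [(AddCircle.norm_coe_eq_abs_iff (p := (1:ℝ)) one_ne_zero).2 hhalf]
  exact habs

lemma norm_rep' {p : ℕ} (hp : 2 ≤ p) {d : ℤ} (hne : d ≠ 0)
    (hlt : d ≤ (p : ℤ) - 1) (hgt : -(p:ℤ) + 1 ≤ d) :
    ‖(((d : ℝ) / p - 1/2 : ℝ) : AddCircle (1:ℝ))‖ ≤ ((p : ℝ) - 2) / (2 * p) := by
  have hp0 : (0:ℝ) < p := by positivity
  rcases lt_or_gt_of_ne hne with hneg | hpos
  · have he : (((d + (p:ℤ) : ℤ) : ℝ) / p - 1/2 : ℝ) = ((d:ℝ)/p - 1/2) + 1 := by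
      push_cast
      field_simp
      ring
    have hcoe : ((((d + (p:ℤ) : ℤ) : ℝ) / p - 1/2 : ℝ) : AddCircle (1:ℝ))
        = (((d : ℝ) / p - 1/2 : ℝ) : AddCircle (1:ℝ)) :=
      (congrArg (fun t : ℝ => (t : AddCircle (1:ℝ))) he).trans
        (AddCircle.coe_add_period (1:ℝ) _)
    exact le_of_eq_of_le (congrArg norm hcoe.symm)
      (norm_rep hp (by omega) (by omega))
  · exact norm_rep hp (by omega) (by omega)

lemma coord_close {p : ℕ} (hp : 2 ≤ p) (a b : Fin p) (hab : a ≠ b) :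
    dist ((((a : ℕ) : ℝ) / p : ℝ) : AddCircle (1:ℝ))
      (((((b : ℕ) : ℝ) / p : ℝ) : AddCircle (1:ℝ)) + ((1/2 : ℝ) : AddCircle (1:ℝ)))
      ≤ ((p : ℝ) - 2) / (2 * p) := by
  have hp0 : (0:ℝ) < p := by positivity
  rw [dist_eq_norm]
  have hco : ((((a : ℕ) : ℝ) / p : ℝ) : AddCircle (1:ℝ))
      - (((((b : ℕ) : ℝ) / p : ℝ) : AddCircle (1:ℝ)) + ((1/2 : ℝ) : AddCircle (1:ℝ)))
      = (((((a:ℕ):ℤ) - ((b:ℕ):ℤ) : ℤ) : ℝ)/p - 1/2 : ℝ) := by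
    rw [← AddCircle.coe_add, ← AddCircle.coe_sub]
    congr 1
    push_cast
    ring
  rw [hco]
  refine norm_rep' hp ?_ ?_ ?_
  · have : (a:ℕ) ≠ (b:ℕ) := fun h => hab (Fin.ext h)
    omega
  · have := a.isLt; omega
  · have := b.isLt; omega

/-- In the flat `n`-torus with the `ℓ²`-metric, for every point `x` of the grid
`L = {(k₁/p, …, kₙ/p)}` of `pⁿ` points, the set `L \ {x}` is contained in a closed
geodesic ball of radius `√((n-1)/4 + ((p-2)/(2p))²)`. -/
theorem torus_grid_in_ball (n p : ℕ) (hn : 1 ≤ n) (hp : p.Prime)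
    (L : Set (PiLp 2 fun _ : Fin n => AddCircle (1:ℝ)))
    (hL : L = {x | ∃ k : Fin n → Fin p, x = WithLp.toLp 2 (fun i => ((((k i : ℕ) : ℝ) / p : ℝ) : AddCircle (1:ℝ)))}) :
    ∀ x ∈ L, ∃ c : PiLp 2 fun _ : Fin n => AddCircle (1:ℝ),
      ∀ y ∈ L \ {x}, dist y c ≤ Real.sqrt ((n - 1) / 4 + ((p - 2) / (2 * p))^2) := by
  have hp2 : 2 ≤ p := hp.two_le
  have hp0 : (0:ℝ) < p := by positivity
  intro x hx
  rw [hL] at hx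
  obtain ⟨k, hk⟩ := hx
  refine ⟨WithLp.toLp 2 (fun i => ((((k i : ℕ) : ℝ) / p : ℝ) : AddCircle (1:ℝ)) + ((1/2 : ℝ) : AddCircle (1:ℝ))), ?_⟩
  intro y hy
  obtain ⟨hyL, hyx⟩ := hy
  rw [hL] at hyL
  obtain ⟨k', hk'⟩ := hyL
  have hyx' : y ≠ x := hyx
  obtain ⟨i₀, hi₀⟩ : ∃ i, k' i ≠ k i := by
    by_contra h
    push_neg at h
    exact hyx' (by rw [hk', hk]; congr 1; funext i; rw [h i])
  set c : PiLp 2 fun _ : Fin n => AddCircle (1:ℝ) :=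
    WithLp.toLp 2 (fun i => ((((k i : ℕ) : ℝ) / p : ℝ) : AddCircle (1:ℝ)) + ((1/2 : ℝ) : AddCircle (1:ℝ))) with hc
  have hdist : dist y c = Real.sqrt (∑ i, dist (y i) (c i) ^ 2) := by
    rw [PiLp.dist_eq_sum (by norm_num : 0 < (2:ENNReal).toReal), Real.sqrt_eq_rpow]
    norm_num [Real.rpow_natCast]
  rw [hdist]
  apply Real.sqrt_le_sqrt
  have hbound : ∀ i, dist (y i) (c i) ≤ 1/2 := fun i => coord_half _ _
  have hb0 : dist (y i₀) (c i₀) ≤ ((p:ℝ) - 2) / (2 * p) := by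
    rw [hk', hc]
    exact coord_close hp2 (k' i₀) (k i₀) hi₀
  have hsplit : ∑ i, dist (y i) (c i) ^ 2
      = dist (y i₀) (c i₀) ^ 2 + ∑ i ∈ Finset.univ.erase i₀, dist (y i) (c i) ^ 2 :=
    (Finset.add_sum_erase _ _ (Finset.mem_univ i₀)).symm
  rw [hsplit]
  have h1 : dist (y i₀) (c i₀) ^ 2 ≤ (((p:ℝ) - 2) / (2 * p)) ^ 2 :=
    pow_le_pow_left₀ dist_nonneg hb0 2
  have h2 : ∑ i ∈ Finset.univ.erase i₀, dist (y i) (c i) ^ 2 ≤ ((n:ℝ) - 1) / 4 := by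
    have := Finset.sum_le_card_nsmul (Finset.univ.erase i₀)
      (fun i => dist (y i) (c i) ^ 2) (1/4 : ℝ)
      (fun i _ => by
        have := hbound i
        nlinarith [dist_nonneg (x := y i) (y := c i)])
    rw [Finset.card_erase_of_mem (Finset.mem_univ i₀), Finset.card_univ, Fintype.card_fin] at this
    refine this.trans ?_
    rw [nsmul_eq_mul]
    have : ((n - 1 : ℕ) : ℝ) = (n:ℝ) - 1 := by
      push_cast [Nat.cast_sub hn]
      ring
    rw [this]
    ring_nf
    linarith
  linarith
end

section
/- (Babenko) Every trigonometric polynomial of degree at most d, f(t) = Σ_{k=1}^{d} (a_k sin(2πkt) + b_k cos(2πkt)), has a zero on every closed interval I ⊆ ℝ/ℤ of length d/(d+1). -/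
open Real Finset in
/-- The geometric sum of exponentials at `d+1` equally spaced points vanishes
for frequencies `1 ≤ k ≤ d`. -/
lemma babenko_expSum (d k : ℕ) (hk1 : 1 ≤ k) (hkd : k ≤ d) (x : ℝ) :
    ∑ j ∈ Finset.range (d + 1),
      Complex.exp ((2 * π * k * (x + j / (d + 1)) : ℝ) * Complex.I) = 0 := by
  have hd1 : ((d : ℂ) + 1) ≠ 0 := by
    exact_mod_cast (Nat.cast_add_one_ne_zero (R := ℂ) d)
  set z : ℂ := Complex.exp ((2 * π * k / (d + 1) : ℂ) * Complex.I) with hz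
  have hterm : ∀ j ∈ Finset.range (d + 1),
      Complex.exp ((2 * π * k * (x + j / (d + 1)) : ℝ) * Complex.I)
        = Complex.exp ((2 * π * k * x : ℂ) * Complex.I) * z ^ j := by
    intro j _
    rw [hz, ← Complex.exp_nat_mul, ← Complex.exp_add]
    congr 1
    push_cast
    field_simp
  rw [Finset.sum_congr rfl hterm, ← Finset.mul_sum]
  have hz1 : z ≠ 1 := by
    intro hzeq
    rw [hz, Complex.exp_eq_one_iff] at hzeq
    obtain ⟨n, hn⟩ := hzeq
    have hI : (Complex.I : ℂ) ≠ 0 := Complex.I_ne_zero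
    have hpi : (π : ℂ) ≠ 0 := by exact_mod_cast Real.pi_ne_zero
    have h2 : (2 : ℂ) ≠ 0 := two_ne_zero
    have h2πI : (2 * (π:ℂ) * Complex.I) ≠ 0 := by
      refine mul_ne_zero (mul_ne_zero h2 hpi) hI
    field_simp at hn
    have hcan : (2 * (π:ℂ) * Complex.I) * k = (2 * (π:ℂ) * Complex.I) * (n * (d + 1)) := by
      linear_combination (2 * (π:ℂ) * Complex.I) * hn
    have hk : (k : ℂ) = n * ((d : ℂ) + 1) := mul_left_cancel₀ h2πI hcan
    have hkr : (k : ℝ) = n * ((d : ℝ) + 1) := by exact_mod_cast hk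
    have hre : ((k : ℝ) / (d + 1)) = (n : ℝ) := by
      rw [hkr]; field_simp
    have h0 : (0 : ℝ) < (k : ℝ) / (d + 1) := by
      apply div_pos (by exact_mod_cast hk1) (by positivity)
    have h1 : (k : ℝ) / (d + 1) < 1 := by
      rw [div_lt_one (by positivity)]
      exact_mod_cast Nat.lt_succ_of_le hkd
    rw [hre] at h0 h1
    have : (0 : ℤ) < n := by exact_mod_cast h0
    have : n < 1 := by exact_mod_cast h1
    omega
  have hzd : z ^ (d + 1) = 1 := by
    rw [hz, ← Complex.exp_nat_mul]
    have : ((d : ℂ) + 1) * (2 * π * k / (d + 1) * Complex.I) = (k : ℂ) * (2 * π * Complex.I) := by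
      field_simp
    rw [show ((d + 1 : ℕ) : ℂ) = (d : ℂ) + 1 by push_cast; ring, this]
    exact_mod_cast Complex.exp_int_mul_two_pi_mul_I k
  rw [geom_sum_eq hz1, hzd]
  simp

open Real in
/-- Babenko's theorem: every trigonometric polynomial of degree at most `d` has a
zero on every closed interval of length `d/(d+1)` (stated for the periodic function
on `ℝ`, i.e. for every closed interval `[c, c + d/(d+1)]`). -/
theorem babenko (d : ℕ) (a b : ℕ → ℝ) (f : ℝ → ℝ)
    (hf : ∀ t, f t = ∑ k ∈ Finset.Icc 1 d,
      (a k * Real.sin (2 * π * k * t) + b k * Real.cos (2 * π * k * t)))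
    (c : ℝ) :
    ∃ t ∈ Set.Icc c (c + (d:ℝ)/(d+1)), f t = 0 := by
  -- the d+1 sample points
  set x : ℕ → ℝ := fun j => c + j / (d + 1) with hx
  have hd1 : (0 : ℝ) < (d : ℝ) + 1 := by positivity
  have hmem : ∀ j ∈ Finset.range (d + 1), x j ∈ Set.Icc c (c + (d : ℝ) / (d + 1)) := by
    intro j hj
    simp only [Finset.mem_range] at hj
    constructor
    · simp only [hx]
      have : (0:ℝ) ≤ (j:ℝ) / (d+1) := by positivity
      linarith
    · simp only [hx]
      have : (j : ℝ) ≤ (d : ℝ) := by exact_mod_cast Nat.lt_succ_iff.mp hj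
      gcongr
  -- key identity: the sample values sum to zero
  have key : ∑ j ∈ Finset.range (d + 1), f (x j) = 0 := by
    simp only [hf, hx]
    rw [Finset.sum_comm]
    apply Finset.sum_eq_zero
    intro k hk
    simp only [Finset.mem_Icc] at hk
    have hE := babenko_expSum d k hk.1 hk.2 c
    have hsin : ∑ j ∈ Finset.range (d + 1),
        Real.sin (2 * π * k * (c + j / (d + 1))) = 0 := by
      have h := congrArg Complex.im hE
      rw [Complex.im_sum] at h
      simp only [Complex.exp_ofReal_mul_I_im] at h
      simpa using h
    have hcos : ∑ j ∈ Finset.range (d + 1),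
        Real.cos (2 * π * k * (c + j / (d + 1))) = 0 := by
      have h := congrArg Complex.re hE
      rw [Complex.re_sum] at h
      simp only [Complex.exp_ofReal_mul_I_re] at h
      simpa using h
    rw [Finset.sum_add_distrib, ← Finset.mul_sum, ← Finset.mul_sum, hsin, hcos]
    ring
  -- continuity of f
  have hcont : Continuous f := by
    have : f = fun t => ∑ k ∈ Finset.Icc 1 d,
        (a k * Real.sin (2 * π * k * t) + b k * Real.cos (2 * π * k * t)) := funext hf
    rw [this]
    apply continuous_finset_sum
    intro k _
    fun_prop
  by_cases h0 : ∃ j ∈ Finset.range (d + 1), f (x j) = 0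
  · obtain ⟨j, hj, hfj⟩ := h0
    exact ⟨x j, hmem j hj, hfj⟩
  · push_neg at h0
    have hne : (Finset.range (d + 1)).Nonempty := Finset.nonempty_range_add_one
    have hpos : ∃ j ∈ Finset.range (d + 1), 0 < f (x j) := by
      by_contra hc
      push_neg at hc
      have : ∑ j ∈ Finset.range (d + 1), f (x j) < 0 :=
        Finset.sum_neg (fun j hj => lt_of_le_of_ne (hc j hj) (h0 j hj)) hne
      linarith [key, this]
    have hneg : ∃ j ∈ Finset.range (d + 1), f (x j) < 0 := by
      by_contra hc
      push_neg at hc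
      have : 0 < ∑ j ∈ Finset.range (d + 1), f (x j) :=
        Finset.sum_pos (fun j hj => lt_of_le_of_ne (hc j hj) (Ne.symm (h0 j hj))) hne
      linarith [key, this]
    obtain ⟨j1, hj1, hfj1⟩ := hneg
    obtain ⟨j2, hj2, hfj2⟩ := hpos
    have hivt := intermediate_value_uIcc (f := f) (a := x j1) (b := x j2)
      (hcont.continuousOn)
    have h0mem : (0 : ℝ) ∈ Set.uIcc (f (x j1)) (f (x j2)) :=
      Set.mem_uIcc.2 (Or.inl ⟨le_of_lt hfj1, le_of_lt hfj2⟩)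
    obtain ⟨t, ht, hft⟩ := hivt h0mem
    exact ⟨t, Set.uIcc_subset_Icc (hmem j1 hj1) (hmem j2 hj2) ht, hft⟩
end

section
/- Let V ⊆ C(S¹, ℝ) be a (2d+1)-dimensional Chebyshev space (containing constants, and such that every non-constant f ∈ V attains each value at most 2d times). Then there is a closed arc I ⊆ S¹ of length d/(d+1) such that every f ∈ V with zero mean has a zero on I. -/
open MeasureTheory Set

namespace Babenko

noncomputable section

local notation "X" => AddCircle (1:ℝ)






lemma continuous_coe : Continuous (fun t : ℝ => (t : X)) :=
  AddCircle.continuous_mk' 1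

lemma coe_lift (a : ℝ) (z : X) : (((AddCircle.equivIco 1 a z : ℝ)) : X) = z :=
  (AddCircle.equivIco 1 a).symm_apply_apply z

lemma lift_mem (a : ℝ) (z : X) : ((AddCircle.equivIco 1 a z : ℝ)) ∈ Ico a (a+1) :=
  (AddCircle.equivIco 1 a z).2

lemma lift_coe (a : ℝ) {t : ℝ} (ht : t ∈ Ico a (a+1)) :
    ((AddCircle.equivIco 1 a ((t : ℝ) : X) : ℝ)) = t :=
  (AddCircle.coe_eq_coe_iff_of_mem_Ico (lift_mem a _) ht).1 (coe_lift a _)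

/-- Induction: a continuous function positive on an interval except at `n` interior zeros
takes each sufficiently small positive value at least `2n` times in the interior. -/
lemma exists_level_points (F : ℝ → ℝ) (hF : Continuous F) :
    ∀ (n : ℕ) (a b : ℝ) (T : Finset ℝ), a < b → T.card = n →
    (∀ t ∈ T, t ∈ Ioo a b) → (∀ t ∈ T, F t = 0) →
    (∀ t ∈ Ioo a b, t ∉ T → 0 < F t) → 0 < F a → 0 < F b →
    ∃ ε₀ > 0, ∀ ε : ℝ, 0 < ε → ε < ε₀ →
      ∃ P : Finset ℝ, (∀ p ∈ P, p ∈ Ioo a b) ∧ P.card = 2 * n ∧ ∀ p ∈ P, F p = ε := by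
  intro n
  induction n with
  | zero =>
    intro a b T hab hTcard _ _ _ _ _
    exact ⟨1, one_pos, fun ε _ _ => ⟨∅, by simp, by simp, by simp⟩⟩
  | succ k ih =>
    intro a b T hab hTcard hTmem hTzero hpos hFa hFb
    have hTne : T.Nonempty := by rw [← Finset.card_pos, hTcard]; omega
    set t₁ := T.min' hTne with ht₁def
    have ht₁T : t₁ ∈ T := T.min'_mem hTne
    have ht₁ab : t₁ ∈ Ioo a b := hTmem _ ht₁T
    set T' := T.erase t₁ with hT'def
    have hT'card : T'.card = k := by
      rw [hT'def, Finset.card_erase_of_mem ht₁T, hTcard]; omega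
    have hnext : ∃ nxt : ℝ, t₁ < nxt ∧ nxt ≤ b ∧ ∀ t ∈ T', nxt ≤ t := by
      by_cases h : T'.Nonempty
      · refine ⟨T'.min' h, ?_, ?_, fun t ht => T'.min'_le t ht⟩
        · have hmem : T'.min' h ∈ T' := T'.min'_mem h
          have h1 : t₁ ≤ T'.min' h := T.min'_le _ (Finset.mem_of_mem_erase hmem)
          have h2 : T'.min' h ≠ t₁ := Finset.ne_of_mem_erase hmem
          exact lt_of_le_of_ne h1 (Ne.symm h2)
        · exact le_of_lt (hTmem _ (Finset.mem_of_mem_erase (T'.min'_mem h))).2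
      · exact ⟨b, ht₁ab.2, le_refl b, fun t ht => absurd ⟨t, ht⟩ h⟩
    obtain ⟨nxt, hnxt1, hnxt2, hnxt3⟩ := hnext
    set u := (t₁ + nxt)/2 with hudef
    have hu1 : t₁ < u := by rw [hudef]; linarith
    have hu2 : u < nxt := by rw [hudef]; linarith
    have hub : u < b := lt_of_lt_of_le hu2 hnxt2
    have hau : a < u := lt_trans ht₁ab.1 hu1
    have huT : u ∉ T := by
      intro huT
      rcases eq_or_ne u t₁ with h | h
      · exact absurd h.symm (ne_of_lt hu1)
      · exact absurd (hnxt3 u (Finset.mem_erase.2 ⟨h, huT⟩)) (not_le.2 hu2)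
    have hFu : 0 < F u := hpos u ⟨hau, hub⟩ huT
    have ihres := ih u b T' hub hT'card
      (fun t ht => ⟨lt_of_lt_of_le hu2 (hnxt3 t ht), (hTmem t (Finset.mem_of_mem_erase ht)).2⟩)
      (fun t ht => hTzero t (Finset.mem_of_mem_erase ht))
      (fun t ht htT' => by
        refine hpos t ⟨lt_trans hau ht.1, ht.2⟩ ?_
        intro htT
        rcases eq_or_ne t t₁ with h | h
        · rw [h] at ht; exact absurd ht.1 (not_lt.2 (le_of_lt hu1))
        · exact htT' (Finset.mem_erase.2 ⟨h, htT⟩))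
      hFu hFb
    obtain ⟨ε₁, hε₁, H1⟩ := ihres
    refine ⟨min (min (F a) (F u)) ε₁, by positivity, fun ε hε hεlt => ?_⟩
    have hεFa : ε < F a := lt_of_lt_of_le hεlt (le_trans (min_le_left _ _) (min_le_left _ _))
    have hεFu : ε < F u := lt_of_lt_of_le hεlt (le_trans (min_le_left _ _) (min_le_right _ _))
    have hεε₁ : ε < ε₁ := lt_of_lt_of_le hεlt (min_le_right _ _)
    obtain ⟨P', hP'mem, hP'card, hP'val⟩ := H1 ε hε hεε₁
    have hFt₁ : F t₁ = 0 := hTzero _ ht₁T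
    have hp₁ : ∃ p₁ ∈ Ioo a t₁, F p₁ = ε := by
      have := intermediate_value_Ioo' (le_of_lt ht₁ab.1) hF.continuousOn
        (show ε ∈ Ioo (F t₁) (F a) by rw [hFt₁]; exact ⟨hε, hεFa⟩)
      obtain ⟨p, hp, hpv⟩ := this
      exact ⟨p, hp, hpv⟩
    have hp₂ : ∃ p₂ ∈ Ioo t₁ u, F p₂ = ε := by
      have := intermediate_value_Ioo (le_of_lt hu1) hF.continuousOn
        (show ε ∈ Ioo (F t₁) (F u) by rw [hFt₁]; exact ⟨hε, hεFu⟩)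
      obtain ⟨p, hp, hpv⟩ := this
      exact ⟨p, hp, hpv⟩
    obtain ⟨p₁, hp₁m, hp₁v⟩ := hp₁
    obtain ⟨p₂, hp₂m, hp₂v⟩ := hp₂
    have hp₂P' : p₂ ∉ P' := fun h => absurd (hP'mem _ h).1 (not_lt.2 (le_of_lt hp₂m.2))
    have hp₁P : p₁ ∉ insert p₂ P' := by
      intro h
      rcases Finset.mem_insert.1 h with h | h
      · subst h; exact absurd hp₂m.1 (not_lt.2 (le_of_lt hp₁m.2))
      · exact absurd (hP'mem _ h).1 (not_lt.2 (le_of_lt (lt_trans hp₁m.2 hu1)))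
    refine ⟨insert p₁ (insert p₂ P'), ?_, ?_, ?_⟩
    · intro p hp
      rcases Finset.mem_insert.1 hp with h | h
      · subst h; exact ⟨hp₁m.1, lt_trans hp₁m.2 ht₁ab.2⟩
      rcases Finset.mem_insert.1 h with h | h
      · subst h; exact ⟨lt_trans ht₁ab.1 hp₂m.1, lt_trans hp₂m.2 hub⟩
      · exact ⟨lt_trans hau (hP'mem p h).1, (hP'mem p h).2⟩
    · rw [Finset.card_insert_of_notMem hp₁P, Finset.card_insert_of_notMem hp₂P', hP'card]
      ring
    · intro p hp
      rcases Finset.mem_insert.1 hp with h | h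
      · subst h; exact hp₁v
      rcases Finset.mem_insert.1 h with h | h
      · subst h; exact hp₂v
      · exact hP'val p h

lemma card_zeros_le (d : ℕ) (g : C(X, ℝ))
    (hch : (¬ ∃ c : ℝ, ∀ x, g x = c) → ∀ b : ℝ,
        (⇑g ⁻¹' {b}).Finite ∧ (⇑g ⁻¹' {b}).ncard ≤ 2 * d)
    (hg0 : ∀ x, 0 ≤ g x) (hgne : ∃ x, g x ≠ 0) :
    ∃ s : Finset X, (∀ x, g x = 0 → x ∈ s) ∧ s.card ≤ d := by
  obtain ⟨x₀, hx₀⟩ := hgne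
  have hx₀pos : 0 < g x₀ := lt_of_le_of_ne (hg0 x₀) (Ne.symm hx₀)
  by_cases hc : ∃ c : ℝ, ∀ x, g x = c
  · obtain ⟨cv, hcv⟩ := hc
    refine ⟨∅, fun x hx => ?_, by simp⟩
    rw [hcv] at hx
    rw [hcv x₀, hx] at hx₀pos
    exact absurd hx₀pos (lt_irrefl 0)
  · have hfin : (⇑g ⁻¹' {(0:ℝ)}).Finite := (hch hc 0).1
    set Z : Finset X := hfin.toFinset with hZdef
    have hZmem : ∀ x : X, g x = 0 ↔ x ∈ Z := by
      intro x
      rw [hZdef, Set.Finite.mem_toFinset]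
      simp [Set.mem_preimage]
    refine ⟨Z, fun x hx => (hZmem x).1 hx, ?_⟩
    by_contra hcard
    push_neg at hcard
    -- lift everything to [a, a+1]
    set a : ℝ := (AddCircle.equivIco 1 0 x₀ : ℝ) with hadef
    have hax₀ : ((a : ℝ) : X) = x₀ := coe_lift 0 x₀
    set F : ℝ → ℝ := fun t => g ((t : ℝ) : X) with hFdef
    have hFcont : Continuous F := g.continuous.comp continuous_coe
    set T : Finset ℝ := Z.image (fun z => (AddCircle.equivIco 1 a z : ℝ)) with hTdef
    have hTcard : T.card = Z.card := by
      rw [hTdef]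
      apply Finset.card_image_of_injOn
      intro z₁ _ z₂ _ h
      have h' : ((AddCircle.equivIco 1 a z₁ : ℝ)) = ((AddCircle.equivIco 1 a z₂ : ℝ)) := h
      rw [← coe_lift a z₁, ← coe_lift a z₂, h']
    have hTIoo : ∀ t ∈ T, t ∈ Ioo a (a+1) := by
      intro t ht
      rw [hTdef, Finset.mem_image] at ht
      obtain ⟨z, hz, rfl⟩ := ht
      rcases eq_or_lt_of_le (lift_mem a z).1 with h | h
      · exfalso
        have : ((a : ℝ) : X) = z := by rw [h]; exact coe_lift a z
        rw [hax₀] at this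
        rw [← this] at hz
        have := (hZmem x₀).2 hz
        rw [this] at hx₀pos
        exact absurd hx₀pos (lt_irrefl 0)
      · exact ⟨h, (lift_mem a z).2⟩
    have hTzero : ∀ t ∈ T, F t = 0 := by
      intro t ht
      rw [hTdef, Finset.mem_image] at ht
      obtain ⟨z, hz, rfl⟩ := ht
      rw [hFdef]
      simp only []
      rw [coe_lift a z]
      exact (hZmem z).2 hz
    have hpos : ∀ t ∈ Ioo a (a+1), t ∉ T → 0 < F t := by
      intro t ht htT
      rcases eq_or_lt_of_le (hg0 ((t:ℝ):X)) with h | h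
      · exfalso
        apply htT
        rw [hTdef, Finset.mem_image]
        refine ⟨((t:ℝ):X), (hZmem _).1 h.symm, ?_⟩
        exact lift_coe a (Ioo_subset_Ico_self ht)
      · exact h
    have hFa : 0 < F a := by rw [hFdef]; simp only []; rw [hax₀]; exact hx₀pos
    have hFb : 0 < F (a+1) := by
      rw [hFdef]; simp only []
      rw [AddCircle.coe_add_period 1 a, hax₀]
      exact hx₀pos
    obtain ⟨ε₀, hε₀, H⟩ := exists_level_points F hFcont T.card a (a+1) T
      (by linarith) rfl hTIoo hTzero hpos hFa hFb
    obtain ⟨P, hPmem, hPcard, hPval⟩ := H (ε₀/2) (by linarith) (by linarith)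
    set Q : Finset X := P.image (fun t => ((t:ℝ) : X)) with hQdef
    have hQcard : Q.card = P.card := by
      rw [hQdef]
      apply Finset.card_image_of_injOn
      intro t₁ h₁ t₂ h₂ h
      exact (AddCircle.coe_eq_coe_iff_of_mem_Ico (Ioo_subset_Ico_self (hPmem _ h₁))
        (Ioo_subset_Ico_self (hPmem _ h₂))).1 h
    have hQsub : (Q : Set X) ⊆ ⇑g ⁻¹' {ε₀/2} := by
      intro x hx
      rw [hQdef] at hx
      simp only [Finset.coe_image, Set.mem_image, Finset.mem_coe] at hx
      obtain ⟨t, ht, rfl⟩ := hx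
      exact hPval t ht
    have hle : (Q : Set X).ncard ≤ 2 * d := by
      refine le_trans (Set.ncard_le_ncard hQsub (hch hc (ε₀/2)).1) (hch hc (ε₀/2)).2
    rw [Set.ncard_coe_finset, hQcard, hPcard, hTcard] at hle
    omega







lemma integ (f : C(X, ℝ)) : Integrable (fun x => f x) volume :=
  f.continuous.integrable_of_hasCompactSupport (HasCompactSupport.of_compactSpace _)

section Quad

variable (d : ℕ) (V : Submodule ℝ C(X, ℝ))

/-- dot product on coordinates -/
def dot (c v : Fin (2*d+1) → ℝ) : ℝ := ∑ i, c i * v i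

lemma dot_smul (c : Fin (2*d+1) → ℝ) (r : ℝ) (v : Fin (2*d+1) → ℝ) :
    dot d c (r • v) = r * dot d c v := by
  unfold dot
  rw [Finset.mul_sum]
  apply Finset.sum_congr rfl
  intro i _
  simp [Pi.smul_apply, smul_eq_mul]
  ring

lemma dot_sum {ι : Type*} (c : Fin (2*d+1) → ℝ) (s : Finset ι) (y : ι → (Fin (2*d+1) → ℝ)) :
    dot d c (∑ j ∈ s, y j) = ∑ j ∈ s, dot d c (y j) := by
  unfold dot
  rw [Finset.sum_comm]
  apply Finset.sum_congr rfl
  intro i _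
  rw [Finset.sum_apply, Finset.mul_sum]

lemma dot_sub (c v₁ v₂ : Fin (2*d+1) → ℝ) :
    dot d c (v₁ - v₂) = dot d c v₁ - dot d c v₂ := by
  unfold dot
  rw [← Finset.sum_sub_distrib]
  apply Finset.sum_congr rfl
  intro i _
  simp [mul_sub]

lemma dot_neg (c v : Fin (2*d+1) → ℝ) : dot d (-c) v = - dot d c v := by
  unfold dot
  rw [← Finset.sum_neg_distrib]
  apply Finset.sum_congr rfl
  intro i _
  simp

lemma dot_continuous (c : Fin (2*d+1) → ℝ) : Continuous (dot d c) := by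
  unfold dot
  exact continuous_finset_sum _ fun i _ => continuous_const.mul (continuous_apply i)

end Quad

set_option maxHeartbeats 1000000 in
lemma quadrature (d : ℕ) (V : Submodule ℝ C(X, ℝ))
    (hdim : Module.finrank ℝ V = 2 * d + 1)
    (hconst : ∀ c : ℝ, (ContinuousMap.const X c) ∈ V)
    (hzeros : ∀ g : C(X,ℝ), g ∈ V → (∀ x, 0 ≤ g x) → (∃ x, g x ≠ 0) →
       ∃ s : Finset X, (∀ x, g x = 0 → x ∈ s) ∧ s.card ≤ d) :
    ∃ (s : Finset X) (w : X → ℝ), s.Nonempty ∧ s.card ≤ d + 1 ∧ (∀ x ∈ s, 0 ≤ w x) ∧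
      ∀ f : C(X,ℝ), f ∈ V → ∫ x, f x = ∑ x ∈ s, w x * f x := by
  haveI : FiniteDimensional ℝ V := FiniteDimensional.of_finrank_eq_succ hdim
  set bV : Module.Basis (Fin (2*d+1)) ℝ V := Module.finBasisOfFinrankEq ℝ V hdim with hbVdef
  set u : X → (Fin (2*d+1) → ℝ) := fun x i => ((bV i : C(X,ℝ)) x) with hudef
  have hu_cont : Continuous u := continuous_pi fun i => (bV i : C(X,ℝ)).continuous
  set Λ : Fin (2*d+1) → ℝ := fun i => ∫ x, (bV i : C(X,ℝ)) x with hΛdef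
  -- the V-element with coordinates c
  set gV : (Fin (2*d+1) → ℝ) → V := fun c => ∑ i, c i • bV i with hgVdef
  have hgx : ∀ c x, ((gV c : C(X,ℝ))) x = dot d c (u x) := by
    intro c x
    rw [hgVdef]
    simp only [Submodule.coe_sum, Submodule.coe_smul]
    rw [ContinuousMap.sum_apply]
    apply Finset.sum_congr rfl
    intro i _
    simp [dot, hudef]
  have hgint : ∀ c, ∫ x, (gV c : C(X,ℝ)) x = dot d c Λ := by
    intro c
    have h1 : (fun x => (gV c : C(X,ℝ)) x) = fun x => ∑ i, c i * (bV i : C(X,ℝ)) x := by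
      funext x
      rw [hgx]
      simp [dot, hudef]
    rw [h1, integral_finset_sum]
    · apply Finset.sum_congr rfl
      intro i _
      simp only [← smul_eq_mul]
      rw [integral_smul]
    · intro i _
      exact (integ _).const_mul _
  have hrepr : ∀ f : C(X,ℝ), ∀ hf : f ∈ V, gV (bV.repr ⟨f, hf⟩) = ⟨f, hf⟩ := by
    intro f hf
    rw [hgVdef]
    exact bV.sum_repr ⟨f, hf⟩
  -- the cone
  set C : Set (Fin (2*d+1) → ℝ) :=
    {y | ∃ (t : Fin (2*d+1) → ℝ) (x : Fin (2*d+1) → X),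
      (∀ i, 0 ≤ t i) ∧ y = ∑ i, t i • u (x i)} with hCdef
  have merge : ∀ (m : ℕ) (t : Fin m → ℝ) (x : Fin m → X), (∀ i, 0 ≤ t i) →
      (∑ i, t i • u (x i)) ∈ C := by
    intro m
    induction m with
    | zero =>
      intro t x ht
      refine ⟨0, fun _ => (0:X), fun i => le_refl 0, ?_⟩
      simp
    | succ k ih =>
      intro t x ht
      by_cases hk : k + 1 ≤ 2*d+1
      · -- pad with zeros
        set G : ℕ → (Fin (2*d+1) → ℝ) := fun i =>
          if h : i < k+1 then t ⟨i, h⟩ • u (x ⟨i, h⟩) else 0 with hGdef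
        refine ⟨fun i => if h : (i:ℕ) < k+1 then t ⟨i, h⟩ else 0,
          fun i => if h : (i:ℕ) < k+1 then x ⟨i, h⟩ else (0:X), ?_, ?_⟩
        · intro i
          by_cases h : (i:ℕ) < k+1
          · simp only [dif_pos h]; exact ht _
          · simp only [dif_neg h, le_refl]
        · have h1 : ∑ i : Fin (2*d+1),
              (if h : (i:ℕ) < k+1 then t ⟨i, h⟩ else 0) •
                u (if h : (i:ℕ) < k+1 then x ⟨i, h⟩ else (0:X)) = ∑ i : Fin (2*d+1), G i := by
            apply Finset.sum_congr rfl
            intro i _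
            by_cases h : (i:ℕ) < k+1
            · simp only [hGdef, dif_pos h]
            · simp only [hGdef, dif_neg h, zero_smul]
          rw [h1, Fin.sum_univ_eq_sum_range (fun i => G i) (2*d+1)]
          rw [← Finset.sum_subset (Finset.range_subset_range.2 hk) (fun i _ hi => ?_)]
          · rw [← Fin.sum_univ_eq_sum_range (fun i => G i) (k+1)]
            apply Finset.sum_congr rfl
            intro i _
            simp only [hGdef, dif_pos i.isLt, Fin.eta]
          · exact dif_neg (Finset.mem_range.not.1 hi)
      · -- too many atoms: reduce by one using a linear dependence
        push_neg at hk
        have hdep : ¬ LinearIndependent ℝ (fun i : Fin (k+1) => u (x i)) := by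
          intro hli
          have hcard := hli.fintype_card_le_finrank
          simp only [Fintype.card_fin, Module.finrank_pi, Fintype.card_fin] at hcard
          omega
        rw [Fintype.not_linearIndependent_iff] at hdep
        obtain ⟨c₀, hc₀sum, i₀, hi₀⟩ := hdep
        have hcex : ∃ c : Fin (k+1) → ℝ, (∑ i, c i • u (x i)) = 0 ∧ ∃ i, 0 < c i := by
          by_cases hpos : ∃ i, 0 < c₀ i
          · exact ⟨c₀, hc₀sum, hpos⟩
          · push_neg at hpos
            refine ⟨-c₀, ?_, i₀, ?_⟩
            · have : ∑ i, (-c₀) i • u (x i) = -∑ i, c₀ i • u (x i) := by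
                rw [← Finset.sum_neg_distrib]
                apply Finset.sum_congr rfl
                intro i _
                simp [neg_smul]
              rw [this, hc₀sum, neg_zero]
            · simp only [Pi.neg_apply]
              have := hpos i₀
              rcases lt_or_eq_of_le this with h | h
              · linarith
              · exact absurd h hi₀
        obtain ⟨c, hcsum, hcpos⟩ := hcex
        set S : Finset (Fin (k+1)) := Finset.univ.filter (fun i => 0 < c i) with hSdef
        have hSne : S.Nonempty := by
          obtain ⟨i, hi⟩ := hcpos
          exact ⟨i, by simp [hSdef, hi]⟩
        have hSimne : (S.image (fun i => t i / c i)).Nonempty := hSne.image _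
        set θ : ℝ := (S.image (fun i => t i / c i)).min' hSimne with hθdef
        obtain ⟨j, hjS, hjθ⟩ := Finset.mem_image.1 ((S.image (fun i => t i / c i)).min'_mem hSimne)
        have hcj : 0 < c j := (Finset.mem_filter.1 hjS).2
        have hθ0 : 0 ≤ θ := by
          rw [hθdef, ← hjθ]
          exact div_nonneg (ht j) (le_of_lt hcj)
        have hθle : ∀ i, 0 < c i → θ ≤ t i / c i := by
          intro i hi
          rw [hθdef]
          exact Finset.min'_le _ _ (Finset.mem_image_of_mem _ (by simp [hSdef, hi]))
        set t'' : Fin (k+1) → ℝ := fun i => t i - θ * c i with ht''def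
        have ht''0 : ∀ i, 0 ≤ t'' i := by
          intro i
          rw [ht''def]
          by_cases hci : 0 < c i
          · have h1 := hθle i hci
            rw [le_div_iff₀ hci] at h1
            simp only []
            linarith
          · push_neg at hci
            have : θ * c i ≤ 0 := mul_nonpos_of_nonneg_of_nonpos hθ0 hci
            have := ht i
            simp only []
            linarith
        have ht''j : t'' j = 0 := by
          rw [ht''def]
          simp only []
          rw [hθdef, ← hjθ, div_mul_cancel₀ _ (ne_of_gt hcj)]
          ring
        have hsum'' : ∑ i, t'' i • u (x i) = ∑ i, t i • u (x i) := by
          have h1 : ∑ i, t'' i • u (x i)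
              = ∑ i, t i • u (x i) - θ • ∑ i, c i • u (x i) := by
            rw [Finset.smul_sum, ← Finset.sum_sub_distrib]
            apply Finset.sum_congr rfl
            intro i _
            rw [ht''def]
            simp only []
            rw [sub_smul, smul_smul]
          rw [h1, hcsum, smul_zero, sub_zero]
        rw [← hsum'', Fin.sum_univ_succAbove (fun i => t'' i • u (x i)) j, ht''j, zero_smul,
          zero_add]
        exact ih (fun i => t'' (j.succAbove i)) (fun i => x (j.succAbove i))
          (fun i => ht''0 _)

  have hψrep : ∀ (ψ : (Fin (2*d+1) → ℝ) →ₗ[ℝ] ℝ), ∃ c, ∀ v, ψ v = dot d c v := by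
    intro ψ
    refine ⟨fun i => ψ (fun j => if i = j then 1 else 0), fun v => ?_⟩
    rw [LinearMap.pi_apply_eq_sum_univ ψ v]
    apply Finset.sum_congr rfl
    intro i _
    rw [smul_eq_mul, mul_comm]
  have hmem_sum : ∀ {ι : Type} [Fintype ι] (t : ι → ℝ) (x : ι → X), (∀ i, 0 ≤ t i) →
      (∑ i, t i • u (x i)) ∈ C := by
    intro ι _ t x ht
    have e := Fintype.equivFin ι
    rw [← Equiv.sum_comp e.symm (fun i => t i • u (x i))]
    exact merge _ (fun j => t (e.symm j)) (fun j => x (e.symm j)) (fun j => ht _)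
  have hu_mem : ∀ x : X, u x ∈ C := by
    intro x
    have := merge 1 (fun _ => (1:ℝ)) (fun _ => x) (fun _ => zero_le_one)
    simpa using this
  have h0C : (0 : Fin (2*d+1) → ℝ) ∈ C := by
    have := merge 0 (fun i => (0:ℝ)) (fun _ => (0:X)) (fun i => le_refl 0)
    simpa using this
  have hC_smul : ∀ (r : ℝ), 0 ≤ r → ∀ y ∈ C, r • y ∈ C := by
    rintro r hr y ⟨t, xs, ht, rfl⟩
    rw [Finset.smul_sum]
    have h1 : ∀ i, r • (t i • u (xs i)) = (r * t i) • u (xs i) := fun i => (smul_smul r (t i) _)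
    rw [Finset.sum_congr rfl fun i _ => h1 i]
    exact hmem_sum _ _ (fun i => mul_nonneg hr (ht i))
  have hC_conv : Convex ℝ C := by
    rintro y₁ ⟨t₁, x₁, ht₁, rfl⟩ y₂ ⟨t₂, x₂, ht₂, rfl⟩ α β hα hβ hαβ
    have h1 : ∑ i : Fin ((2*d+1) + (2*d+1)),
            (Fin.append (fun i => α * t₁ i) (fun i => β * t₂ i)) i •
              u ((Fin.append x₁ x₂) i)
        = α • ∑ i, t₁ i • u (x₁ i) + β • ∑ i, t₂ i • u (x₂ i) := by
      rw [Fin.sum_univ_add]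
      congr 1
      · rw [Finset.smul_sum]
        apply Finset.sum_congr rfl
        intro i _
        rw [Fin.append_left, Fin.append_left, smul_smul]
      · rw [Finset.smul_sum]
        apply Finset.sum_congr rfl
        intro i _
        rw [Fin.append_right, Fin.append_right, smul_smul]
    rw [← h1]
    apply hmem_sum
    intro i
    refine Fin.addCases (motive := fun i =>
        0 ≤ (Fin.append (fun i => α * t₁ i) (fun i => β * t₂ i)) i) ?_ ?_ i
    · intro j; rw [Fin.append_left]; exact mul_nonneg hα (ht₁ j)
    · intro j; rw [Fin.append_right]; exact mul_nonneg hβ (ht₂ j)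
  -- the constant function 1 and its coordinates
  set one : V := ⟨ContinuousMap.const X 1, hconst 1⟩ with honedef
  set c1 : Fin (2*d+1) → ℝ := ⇑(bV.repr one) with hc1def
  have hgone : gV c1 = one := bV.sum_repr one
  have hc1u : ∀ x : X, dot d c1 (u x) = 1 := by
    intro x
    rw [← hgx, hgone]
    rfl
  have hc1Λ : dot d c1 Λ = 1 := by
    rw [← hgint, hgone]
    have : (fun x : X => ((one : C(X,ℝ))) x) = fun _ => (1:ℝ) := rfl
    rw [this, integral_const]
    simp [Measure.real, AddCircle.measure_univ]
  have hCnonneg : ∀ y ∈ C, 0 ≤ dot d c1 y := by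
    rintro y ⟨t, xs, ht, rfl⟩
    rw [dot_sum]
    apply Finset.sum_nonneg
    intro i _
    rw [dot_smul, hc1u, mul_one]
    exact ht i
  have hCdot : ∀ (t : Fin (2*d+1) → ℝ) (xs : Fin (2*d+1) → X),
      dot d c1 (∑ i, t i • u (xs i)) = ∑ i, t i := by
    intro t xs
    rw [dot_sum]
    apply Finset.sum_congr rfl
    intro i _
    rw [dot_smul, hc1u, mul_one]
  have hspan : ∀ (ψ : (Fin (2*d+1) → ℝ) →ₗ[ℝ] ℝ), (∀ x : X, ψ (u x) = 0) → ψ = 0 := by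
    intro ψ hψ
    obtain ⟨cψ, hcψ⟩ := hψrep ψ
    have hg0 : ∀ x : X, ((gV cψ : C(X,ℝ))) x = 0 := fun x => by rw [hgx, ← hcψ, hψ]
    have hgz : gV cψ = 0 := by
      apply Subtype.ext
      ext x
      simpa using hg0 x
    have hc0 : ∀ i, cψ i = 0 := by
      have hli := bV.linearIndependent
      rw [linearIndependent_iff'] at hli
      exact fun i => hli Finset.univ cψ hgz i (Finset.mem_univ i)
    apply LinearMap.ext
    intro v
    rw [hcψ]
    simp [dot, hc0]
  -- the cone is closed
  have hΦcont : Continuous (fun p : (Fin (2*d+1) → ℝ) × (Fin (2*d+1) → X) =>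
      ∑ i, p.1 i • u (p.2 i)) := by
    apply continuous_finset_sum
    intro i _
    exact ((continuous_apply i).comp continuous_fst).smul
      (hu_cont.comp ((continuous_apply i).comp continuous_snd))
  have hC_closed : IsClosed C := by
    apply isClosed_of_closure_subset
    intro y hy
    set R : ℝ := dot d c1 y + 1 with hRdef
    have hUopen : IsOpen {z | dot d c1 z < R} := isOpen_lt (dot_continuous d c1) continuous_const
    have hyU : y ∈ {z | dot d c1 z < R} := by
      simp only [Set.mem_setOf_eq, hRdef]
      linarith
    have h1 : y ∈ closure ({z | dot d c1 z < R} ∩ C) := hUopen.inter_closure ⟨hyU, hy⟩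
    set S : Set ((Fin (2*d+1) → ℝ) × (Fin (2*d+1) → X)) :=
      (Set.univ.pi (fun _ => Icc (0:ℝ) R)) ×ˢ (Set.univ) with hSdef
    have hScomp : IsCompact S := (isCompact_univ_pi (fun _ => isCompact_Icc)).prod isCompact_univ
    have hsub : {z | dot d c1 z < R} ∩ C ⊆
        (fun p : (Fin (2*d+1) → ℝ) × (Fin (2*d+1) → X) => ∑ i, p.1 i • u (p.2 i)) '' S := by
      rintro z ⟨hzU, t, xs, ht, rfl⟩
      refine ⟨(t, xs), ⟨?_, Set.mem_univ _⟩, rfl⟩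
      intro i _
      refine ⟨ht i, ?_⟩
      have h3 : t i ≤ ∑ i, t i := Finset.single_le_sum (fun i _ => ht i) (Finset.mem_univ i)
      have h2 := hCdot t xs
      simp only [Set.mem_setOf_eq, h2] at hzU
      linarith
    have h4 := closure_minimal hsub ((hScomp.image hΦcont).isClosed)
    obtain ⟨⟨t, xs⟩, hmem, heq⟩ := h4 h1
    exact ⟨t, xs, fun i => (hmem.1 i (Set.mem_univ i)).1, heq.symm⟩
  -- Λ is in the cone
  have hΛC : Λ ∈ C := by
    by_contra hΛ
    obtain ⟨ψ, r, h1, h2⟩ := geometric_hahn_banach_closed_point hC_conv hC_closed hΛ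
    have hr0 : 0 < r := by
      have := h1 0 h0C
      rwa [map_zero] at this
    have hψu : ∀ x : X, ψ (u x) ≤ 0 := by
      intro x
      by_contra hpos
      push_neg at hpos
      have hmem := hC_smul ((r+1)/(ψ (u x))) (by positivity) _ (hu_mem x)
      have := h1 _ hmem
      rw [ContinuousLinearMap.map_smul, smul_eq_mul, div_mul_cancel₀ _ (ne_of_gt hpos)] at this
      linarith
    obtain ⟨cψ, hcψ⟩ := hψrep ψ.toLinearMap
    have hgle : ∀ x : X, ((gV cψ : C(X,ℝ))) x ≤ 0 := by
      intro x
      rw [hgx, ← hcψ]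
      exact hψu x
    have hint : ∫ x, ((gV cψ : C(X,ℝ))) x ≤ 0 := integral_nonpos hgle
    rw [hgint, ← hcψ] at hint
    have : (r:ℝ) < 0 := by
      have := h2
      simp only [ContinuousLinearMap.coe_coe] at hint
      linarith
    linarith
  -- a point in the interior of the cone
  obtain ⟨bs, hbs_sub, hbs_span, hbs_ind⟩ := exists_linearIndependent ℝ (Set.range u)
  have hspan_top : Submodule.span ℝ (Set.range u) = ⊤ := by
    by_contra h
    obtain ⟨φ₀, hφ₀, hker⟩ :=
      Submodule.exists_dual_map_eq_bot_of_lt_top (lt_top_iff_ne_top.2 h) inferInstance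
    have hz : φ₀ = 0 := by
      apply hspan φ₀
      intro x
      have hm : φ₀ (u x) ∈ (Submodule.span ℝ (Set.range u)).map φ₀ :=
        Submodule.mem_map_of_mem (Submodule.subset_span (Set.mem_range_self x))
      simpa [hker] using hm
    exact hφ₀ hz
  haveI : Finite ↥bs := hbs_ind.finite
  haveI : Fintype ↥bs := Fintype.ofFinite _
  set B : Module.Basis ↥bs ℝ (Fin (2*d+1) → ℝ) :=
    Module.Basis.mk hbs_ind (by rw [Subtype.range_coe, hbs_span, hspan_top]) with hBdef
  have hBval : ∀ i : ↥bs, B i = (i : Fin (2*d+1) → ℝ) := by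
    intro i
    rw [hBdef, Module.Basis.mk_apply]
  have hxc : ∀ i : ↥bs, ∃ xx : X, u xx = B i := by
    intro i
    rw [hBval]
    exact hbs_sub i.2
  choose xc hxcval using hxc
  set P : Set (Fin (2*d+1) → ℝ) := ⇑(B.equivFun) ⁻¹' {y : ↥bs → ℝ | ∀ i, 0 < y i} with hPdef
  have hQopen : IsOpen {y : ↥bs → ℝ | ∀ i, 0 < y i} := by
    have : {y : ↥bs → ℝ | ∀ i, 0 < y i} = ⋂ i, (fun y : ↥bs → ℝ => y i) ⁻¹' Ioi 0 := by
      ext; simp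
    rw [this]
    exact isOpen_iInter_of_finite fun i => (continuous_apply i).isOpen_preimage _ isOpen_Ioi
  have hPopen : IsOpen P := by
    rw [hPdef]
    have hcont : Continuous ⇑(B.equivFun) := by
      have : (⇑(B.equivFun) : (Fin (2*d+1) → ℝ) → (↥bs → ℝ)) = ⇑(B.equivFunL) := rfl
      rw [this]
      exact (B.equivFunL).continuous
    exact hQopen.preimage hcont
  have hPsub : P ⊆ C := by
    intro z hz
    have h1 : ∑ i, B.equivFun z i • B i = z := B.sum_equivFun z
    have h2 : ∑ i, B.equivFun z i • u (xc i) = z := by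
      conv_rhs => rw [← h1]
      apply Finset.sum_congr rfl
      intro i _
      rw [hxcval]
    rw [← h2]
    exact hmem_sum _ _ (fun i => le_of_lt (hz i))
  set z₀ : Fin (2*d+1) → ℝ := B.equivFun.symm (fun _ => 1) with hz₀def
  have hz₀ : z₀ ∈ interior C := by
    apply interior_maximal hPsub hPopen
    rw [hPdef]
    simp only [Set.mem_preimage, hz₀def, LinearEquiv.apply_symm_apply]
    intro i
    exact one_pos
  -- supporting functional at a non-interior point of C
  have sep : ∀ p, p ∈ C → p ∉ interior C → ∃ ψ : (Fin (2*d+1) → ℝ) →L[ℝ] ℝ,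
      (∀ z ∈ C, ψ z ≤ 0) ∧ ψ p = 0 ∧ ∃ x : X, ψ (u x) < 0 := by
    intro p hpC hpI
    obtain ⟨ψ, hψ⟩ := geometric_hahn_banach_open_point (hC_conv.interior) isOpen_interior hpI
    have hle : ∀ z ∈ C, ψ z ≤ ψ p := by
      intro z hz
      have htd : Filter.Tendsto (fun θ : ℝ => ψ (θ • z₀ + (1-θ) • z)) (nhdsWithin 0 (Ioi 0))
          (nhds (ψ ((0:ℝ) • z₀ + (1-(0:ℝ)) • z))) := by
        apply Filter.Tendsto.mono_left _ nhdsWithin_le_nhds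
        apply Continuous.tendsto
        exact ψ.continuous.comp ((continuous_id.smul continuous_const).add
          ((continuous_const.sub continuous_id).smul continuous_const))
      simp only [zero_smul, sub_zero, one_smul, zero_add] at htd
      apply le_of_tendsto htd
      filter_upwards [Ioo_mem_nhdsGT_of_mem (show (0:ℝ) ∈ Ico (0:ℝ) 1 from ⟨le_refl 0, one_pos⟩)]
        with θ hθ
      exact le_of_lt (hψ _ (hC_conv.combo_interior_closure_mem_interior hz₀
        (subset_closure hz) hθ.1 (by linarith [hθ.2]) (by ring)))
    have hp0 : ψ p = 0 := by
      have h1 : ψ 0 ≤ ψ p := hle 0 h0C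
      have h2 : ψ ((2:ℝ) • p) ≤ ψ p := hle _ (hC_smul 2 (by norm_num) p hpC)
      rw [ContinuousLinearMap.map_smul, smul_eq_mul] at h2
      rw [map_zero] at h1
      linarith
    refine ⟨ψ, fun z hz => by have := hle z hz; rwa [hp0] at this, hp0, ?_⟩
    by_contra hx
    push_neg at hx
    have hzero : ∀ x : X, ψ.toLinearMap (u x) = 0 := by
      intro x
      have h1 : ψ (u x) ≤ ψ p := hle _ (hu_mem x)
      rw [hp0] at h1
      exact le_antisymm h1 (hx x)
    have hψ0 := hspan ψ.toLinearMap hzero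
    have hz0' : ψ z₀ = 0 := by
      have := congrArg (fun (L : (Fin (2*d+1) → ℝ) →ₗ[ℝ] ℝ) => L z₀) hψ0
      simpa using this
    have hlt := hψ z₀ hz₀
    rw [hz0', hp0] at hlt
    exact lt_irrefl 0 hlt
  -- the maximal weight at the point y₀
  set y₀ : X := (0 : X) with hy₀def
  set W : Set ℝ := {w : ℝ | 0 ≤ w ∧ Λ - w • u y₀ ∈ C} with hWdef
  have hWne : W.Nonempty := ⟨0, le_refl 0, by simpa using hΛC⟩
  have hWbdd : BddAbove W := by
    refine ⟨1, fun w hw => ?_⟩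
    have h1 : 0 ≤ dot d c1 (Λ - w • u y₀) := hCnonneg _ hw.2
    rw [dot_sub, dot_smul, hc1u, hc1Λ] at h1
    linarith
  have hWclosed : IsClosed W := by
    have hWeq : W = Ici (0:ℝ) ∩ ((fun w : ℝ => Λ - w • u y₀) ⁻¹' C) := by
      ext w
      simp [hWdef, Set.mem_Ici, Set.mem_preimage]
    rw [hWeq]
    exact isClosed_Ici.inter (hC_closed.preimage
      (continuous_const.sub (continuous_id.smul continuous_const)))
  set ws : ℝ := sSup W with hwsdef
  have hwsW : ws ∈ W := hWclosed.csSup_mem hWne hWbdd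
  set q : Fin (2*d+1) → ℝ := Λ - ws • u y₀ with hqdef
  have hqC : q ∈ C := hwsW.2
  have hws0 : 0 ≤ ws := hwsW.1
  have huy0 : u y₀ ≠ 0 := by
    intro h
    have h1 := hc1u y₀
    rw [h] at h1
    simp [dot] at h1
  have hqI : q ∉ interior C := by
    intro hq
    obtain ⟨δ, hδ, hball⟩ := Metric.isOpen_iff.1 isOpen_interior q hq
    set ε : ℝ := δ / (2 * ‖u y₀‖) with hεdef
    have hn0 : 0 < ‖u y₀‖ := norm_pos_iff.2 huy0
    have hεpos : 0 < ε := div_pos hδ (by positivity)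
    have hmem : q - ε • u y₀ ∈ interior C := by
      apply hball
      rw [Metric.mem_ball, dist_eq_norm]
      have : q - ε • u y₀ - q = -(ε • u y₀) := by abel
      rw [this, norm_neg, norm_smul, Real.norm_eq_abs, abs_of_pos hεpos, hεdef]
      rw [div_mul_eq_mul_div, mul_comm]
      rw [div_lt_iff₀ (by positivity)]
      nlinarith
    have hmemW : ws + ε ∈ W := by
      refine ⟨by linarith, ?_⟩
      have heq : Λ - (ws + ε) • u y₀ = q - ε • u y₀ := by
        rw [hqdef, add_smul]
        abel
      rw [heq]
      exact interior_subset hmem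
    have hle := le_csSup hWbdd hmemW
    rw [← hwsdef] at hle
    linarith
  -- bridging between integrals and the vector identity
  have hbridge : ∀ (f : C(X,ℝ)) (hf : f ∈ V) (s : Finset X) (w : X → ℝ),
      Λ = ∑ z ∈ s, w z • u z → ∫ x, f x = ∑ z ∈ s, w z * f z := by
    intro f hf s w hΛrep
    have hcoe : ((gV (bV.repr ⟨f, hf⟩) : C(X,ℝ))) = f := by
      rw [hrepr f hf]
    have hfi : ∫ x, f x = dot d (⇑(bV.repr ⟨f, hf⟩)) Λ := by
      rw [show (fun x : X => f x) = (fun x => ((gV (⇑(bV.repr ⟨f, hf⟩)) : C(X,ℝ))) x) from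
        by funext x; rw [hcoe]]
      exact hgint _
    rw [hfi, hΛrep, dot_sum]
    apply Finset.sum_congr rfl
    intro z hz
    rw [dot_smul, ← hgx, hcoe]
  by_cases hq0 : q = 0
  · -- Λ = ws • u y₀ : single-node quadrature
    have hΛeq : Λ = ∑ z ∈ ({y₀} : Finset X), ws • u z := by
      rw [Finset.sum_singleton]
      rw [hqdef] at hq0
      have := sub_eq_zero.1 hq0
      exact this
    refine ⟨{y₀}, fun _ => ws, ⟨y₀, Finset.mem_singleton_self y₀⟩, by simp,
      fun x _ => hws0, fun f hf => hbridge f hf _ _ hΛeq⟩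
  · obtain ⟨ψ, hψC, hψq, x₁, hx₁⟩ := sep q hqC hqI
    obtain ⟨cψ, hcψ⟩ := hψrep ψ.toLinearMap
    set cg : Fin (2*d+1) → ℝ := -cψ with hcgdef
    have hgx' : ∀ x : X, ((gV cg : C(X,ℝ))) x = - ψ (u x) := by
      intro x
      rw [hgx, hcgdef, dot_neg, ← hcψ]
      rfl
    have hg0 : ∀ x, 0 ≤ ((gV cg : C(X,ℝ))) x := by
      intro x
      rw [hgx']
      have := hψC (u x) (hu_mem x)
      linarith
    have hgne : ∃ x, ((gV cg : C(X,ℝ))) x ≠ 0 := by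
      refine ⟨x₁, ?_⟩
      rw [hgx']
      intro h
      rw [neg_eq_zero] at h
      rw [h] at hx₁
      exact lt_irrefl 0 hx₁
    obtain ⟨Z, hZall, hZcard⟩ := hzeros _ (gV cg).2 hg0 hgne
    obtain ⟨t, xs, ht, hqrep⟩ := hqC
    have hterm : ∀ i, t i * ((gV cg : C(X,ℝ))) (xs i) = 0 := by
      have h1 : ψ q = - ∑ i, t i * ((gV cg : C(X,ℝ))) (xs i) := by
        rw [hqrep, map_sum, ← Finset.sum_neg_distrib]
        apply Finset.sum_congr rfl
        intro i _
        rw [ContinuousLinearMap.map_smul, smul_eq_mul, hgx']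
        ring
      have h2 : ∑ i, t i * ((gV cg : C(X,ℝ))) (xs i) = 0 := by
        rw [hψq] at h1
        linarith [h1]
      intro i
      exact (Finset.sum_eq_zero_iff_of_nonneg
        (fun i _ => mul_nonneg (ht i) (hg0 _))).1 h2 i (Finset.mem_univ i)
    set x' : Fin (2*d+1) → X := fun i => if t i = 0 then y₀ else xs i with hx'def
    have hx'mem : ∀ i, x' i ∈ insert y₀ Z := by
      intro i
      rw [hx'def]
      by_cases h : t i = 0
      · simp [h]
      · simp only [if_neg h]
        apply Finset.mem_insert_of_mem
        apply hZall
        rcases mul_eq_zero.1 (hterm i) with h' | h'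
        · exact absurd h' h
        · exact h'
    have hsum' : ∑ i, t i • u (x' i) = ∑ i, t i • u (xs i) := by
      apply Finset.sum_congr rfl
      intro i _
      rw [hx'def]
      by_cases h : t i = 0
      · simp [h]
      · simp [if_neg h]
    set sq : Finset X := insert y₀ Z with hsqdef
    set w : X → ℝ := fun z => (if z = y₀ then ws else 0)
      + ∑ i ∈ Finset.univ.filter (fun i => x' i = z), t i with hwdef
    have hΛrep : Λ = ∑ z ∈ sq, w z • u z := by
      have h1 : ∑ z ∈ sq, w z • u z
          = ∑ z ∈ sq, (if z = y₀ then ws else 0) • u z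
            + ∑ z ∈ sq, (∑ i ∈ Finset.univ.filter (fun i => x' i = z), t i) • u z := by
        rw [← Finset.sum_add_distrib]
        apply Finset.sum_congr rfl
        intro z _
        rw [hwdef, add_smul]
      have h2 : ∑ z ∈ sq, (if z = y₀ then ws else 0) • u z = ws • u y₀ := by
        rw [Finset.sum_eq_single_of_mem y₀ (Finset.mem_insert_self _ _)
          (fun z _ hz => by rw [if_neg hz, zero_smul])]
        rw [if_pos rfl]
      have h3 : ∑ z ∈ sq, (∑ i ∈ Finset.univ.filter (fun i => x' i = z), t i) • u z
          = ∑ i, t i • u (x' i) := by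
        rw [eq_comm, ← Finset.sum_fiberwise_of_maps_to (fun i _ => hx'mem i)
          (fun i => t i • u (x' i))]
        apply Finset.sum_congr rfl
        intro z hz
        rw [Finset.sum_smul]
        apply Finset.sum_congr rfl
        intro i hi
        rw [(Finset.mem_filter.1 hi).2]
      rw [h1, h2, h3, hsum', ← hqrep, hqdef]
      abel
    refine ⟨sq, w, ⟨y₀, Finset.mem_insert_self _ _⟩, ?_, ?_, fun f hf => hbridge f hf _ _ hΛrep⟩
    · calc sq.card ≤ Z.card + 1 := Finset.card_insert_le _ _
        _ ≤ d + 1 := by omega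
    · intro z hz
      rw [hwdef]
      apply add_nonneg
      · by_cases h : z = y₀
        · rw [if_pos h]; exact hws0
        · rw [if_neg h]
      · exact Finset.sum_nonneg fun i _ => ht i

set_option maxHeartbeats 1000000 in
lemma arc_containment (d : ℕ) (s : Finset X) (hne : s.Nonempty) (hcard : s.card ≤ d + 1) :
    ∃ c : ℝ, ∀ x ∈ s, ∃ t ∈ Icc c (c + (d:ℝ)/(d+1)), ((t : ℝ) : X) = x := by
  classical
  set δ : ℝ := ((d:ℝ)+1)⁻¹ with hδdef
  have hδpos : 0 < δ := by positivity
  have hδsum : ((d:ℝ)+1) * δ = 1 := by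
    rw [hδdef, mul_inv_cancel₀]
    positivity
  have hdd : (d:ℝ)/(d+1) = d * δ := by
    rw [hδdef, div_eq_mul_inv]
  obtain ⟨x₀, hx₀⟩ := hne
  set s₀ : ℝ := (AddCircle.equivIco 1 0 x₀ : ℝ) with hs₀def
  have hs₀coe : ((s₀ : ℝ) : X) = x₀ := coe_lift 0 x₀
  set r : X → ℝ := fun x => (AddCircle.equivIco 1 0 (x - x₀) : ℝ) with hrdef
  have hr01 : ∀ x, r x ∈ Ico (0:ℝ) 1 := by
    intro x
    have h := lift_mem 0 (x - x₀)
    exact ⟨h.1, by have := h.2; linarith⟩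
  have hrcoe : ∀ x : X, ((r x : ℝ) : X) = x - x₀ := fun x => coe_lift 0 (x - x₀)
  have hrx₀ : r x₀ = 0 := by
    rw [hrdef]
    simp only [sub_self]
    rw [← QuotientAddGroup.mk_zero]
    exact lift_coe 0 (by constructor <;> norm_num)
  -- the excluded window index
  set e : X → ℕ := fun x => (⌈r x * ((d:ℝ)+1)⌉).toNat % (d+1) with hedef
  have hgood : ∃ j, j ∈ Finset.range (d+1) ∧ ∀ x ∈ s.erase x₀, e x ≠ j := by
    set bad : Finset ℕ := (s.erase x₀).image e with hbaddef
    have hbadcard : bad.card ≤ d := by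
      calc bad.card ≤ (s.erase x₀).card := Finset.card_image_le
        _ ≤ d := by
          have := Finset.card_erase_of_mem hx₀
          omega
    have hsd : (Finset.range (d+1) \ bad).Nonempty := by
      rw [← Finset.card_pos]
      have h1 := Finset.le_card_sdiff bad (Finset.range (d+1))
      rw [Finset.card_range] at h1
      omega
    obtain ⟨j, hj⟩ := hsd
    rw [Finset.mem_sdiff] at hj
    refine ⟨j, hj.1, fun x hx hex => hj.2 ?_⟩
    rw [hbaddef, ← hex]
    exact Finset.mem_image_of_mem e hx
  obtain ⟨j, hjr, hjbad⟩ := hgood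
  have hjd : j ≤ d := by
    rw [Finset.mem_range] at hjr
    omega
  refine ⟨s₀ + j * δ, ?_⟩
  intro x hx
  -- key : either r x ∈ [jδ, (j+d)δ] or r x ≤ (j-1)δ (i.e. r x + 1 ∈ [jδ+1-... ])
  have hmain : ((j:ℝ) * δ ≤ r x ∧ r x ≤ ((j:ℝ)+d) * δ) ∨
      (r x + 1 ≤ ((j:ℝ)+d) * δ + 1 ∧ (j:ℝ) * δ ≤ r x + 1 ∧ r x + 1 - (j*δ) ≤ d * δ) := by
    have hr0 := (hr01 x).1
    have hr1 := (hr01 x).2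
    have hjd' : (j:ℝ) ≤ d := by exact_mod_cast hjd
    by_cases hxx : x = x₀
    · subst hxx
      rw [hrx₀]
      rcases Nat.eq_zero_or_pos j with hj0 | hj0
      · left
        subst hj0
        constructor
        · simp
        · push_cast
          nlinarith
      · right
        have hj1 : (1:ℝ) ≤ (j:ℝ) := by exact_mod_cast hj0
        refine ⟨by nlinarith, by nlinarith, by nlinarith⟩
    · have hex : e x ≠ j := hjbad x (Finset.mem_erase.2 ⟨hxx, hx⟩)
      by_cases hA : ((j:ℝ) * δ ≤ r x ∧ r x ≤ ((j:ℝ)+d) * δ)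
      · exact Or.inl hA
      · right
        rw [not_and_or] at hA
        push_neg at hA
        rcases hA with hA | hA
        · -- r x < jδ ; show r x ≤ (j-1)δ
          have hj0 : j ≠ 0 := by
            intro h
            subst h
            simp only [Nat.cast_zero, zero_mul] at hA
            linarith
          have hj1 : (1:ℝ) ≤ (j:ℝ) := by
            have : 1 ≤ j := Nat.one_le_iff_ne_zero.2 hj0
            exact_mod_cast this
          have hle : r x ≤ ((j:ℝ) - 1) * δ := by
            by_contra hgt
            push_neg at hgt
            have hceil : ⌈r x * ((d:ℝ)+1)⌉ = (j : ℤ) := by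
              rw [Int.ceil_eq_iff]
              constructor
              · push_cast
                nlinarith
              · push_cast
                nlinarith
            have : e x = j := by
              rw [hedef]
              simp only [hceil]
              rw [Int.toNat_natCast]
              exact Nat.mod_eq_of_lt (by omega)
            exact hex this
          refine ⟨by nlinarith, by nlinarith, by nlinarith⟩
        · -- (j+d)δ < r x : impossible
          exfalso
          have hceil : ⌈r x * ((d:ℝ)+1)⌉ = ((j : ℤ) + d + 1) := by
            rw [Int.ceil_eq_iff]
            constructor
            · push_cast
              nlinarith
            · push_cast
              nlinarith
          have : e x = j := by
            rw [hedef]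
            simp only [hceil]
            have h1 : ((j:ℤ) + d + 1).toNat = j + d + 1 := by omega
            rw [h1]
            rw [show j + d + 1 = j + (d+1) * 1 from by ring]
            rw [Nat.add_mul_mod_self_left]
            exact Nat.mod_eq_of_lt (by omega)
          exact hex this
  rcases hmain with ⟨h1, h2⟩ | ⟨h1, h2, h3⟩
  · refine ⟨s₀ + r x, ⟨by linarith, ?_⟩, ?_⟩
    · rw [hdd]
      have : r x - j * δ ≤ d * δ := by linarith
      linarith
    · rw [AddCircle.coe_add, hs₀coe, hrcoe]
      abel
  · refine ⟨s₀ + r x + 1, ⟨by linarith, ?_⟩, ?_⟩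
    · rw [hdd]
      linarith
    · rw [show s₀ + r x + 1 = (s₀ + r x) + 1 from by ring]
      rw [AddCircle.coe_add_period 1 (s₀ + r x)]
      rw [AddCircle.coe_add, hs₀coe, hrcoe]
      abel


end

end Babenko

open MeasureTheory




open MeasureTheory

/-- Babenko's theorem for Chebyshev spaces: if `V ⊆ C(S¹, ℝ)` is a
`(2d+1)`-dimensional Chebyshev space, then there is a closed arc of length
`d/(d+1)` on which every zero-mean `f ∈ V` has a zero. -/
theorem babenko_chebyshev (d : ℕ) (V : Submodule ℝ C(AddCircle (1:ℝ), ℝ))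
    (hdim : Module.finrank ℝ V = 2 * d + 1)
    (hconst : ∀ c : ℝ, (ContinuousMap.const (AddCircle (1:ℝ)) c) ∈ V)
    (hcheb : ∀ f : C(AddCircle (1:ℝ), ℝ), f ∈ V → (¬ ∃ c : ℝ, ∀ x, f x = c) →
      ∀ b : ℝ, (f ⁻¹' {b} : Set (AddCircle (1:ℝ))).Finite ∧
        (f ⁻¹' {b} : Set (AddCircle (1:ℝ))).ncard ≤ 2 * d) :
    ∃ c : ℝ, ∀ f : C(AddCircle (1:ℝ), ℝ), f ∈ V → (∫ x, f x = 0) →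
      ∃ t ∈ Set.Icc c (c + (d:ℝ)/(d+1)), f ((t : ℝ) : AddCircle (1:ℝ)) = 0 := by
  classical
  obtain ⟨s, w, hne, hcard, hw0, hquad⟩ := Babenko.quadrature d V hdim hconst
    (fun g hg hg0 hgne => Babenko.card_zeros_le d g (fun hnc => hcheb g hg hnc) hg0 hgne)
  obtain ⟨c, hc⟩ := Babenko.arc_containment d s hne hcard
  refine ⟨c, ?_⟩
  intro f hf hint
  by_contra hcon
  push_neg at hcon
  choose tx htx1 htx2 using hc
  have hsum : ∑ x ∈ s, w x * f x = 0 := by rw [← hquad f hf]; exact hint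
  have hone : ∑ x ∈ s, w x = 1 := by
    have h1 := hquad (ContinuousMap.const _ (1:ℝ)) (hconst 1)
    simp only [ContinuousMap.const_apply, mul_one] at h1
    rw [← h1, integral_const]
    simp [Measure.real, AddCircle.measure_univ]
  have hwpos : ∃ x ∈ s, 0 < w x := by
    by_contra h
    push_neg at h
    have : ∑ x ∈ s, w x ≤ 0 := Finset.sum_nonpos (fun x hx => h x hx)
    linarith
  obtain ⟨xp, hxp, hwxp⟩ := hwpos
  have hkey : ∀ t₁ ∈ Set.Icc c (c + (d:ℝ)/(d+1)), ∀ t₂ ∈ Set.Icc c (c + (d:ℝ)/(d+1)),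
      f ((t₁:ℝ) : AddCircle (1:ℝ)) < 0 → 0 < f ((t₂:ℝ) : AddCircle (1:ℝ)) → False := by
    intro t₁ h₁ t₂ h₂ hneg hpos
    have hFc : Continuous (fun t : ℝ => f ((t:ℝ) : AddCircle (1:ℝ))) :=
      f.continuous.comp (AddCircle.continuous_mk' 1)
    rcases le_total t₁ t₂ with h | h
    · obtain ⟨t, ht, htv⟩ := intermediate_value_Icc h hFc.continuousOn
        (Set.mem_Icc.2 ⟨le_of_lt hneg, le_of_lt hpos⟩)
      exact hcon t ⟨le_trans h₁.1 ht.1, le_trans ht.2 h₂.2⟩ htv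
    · obtain ⟨t, ht, htv⟩ := intermediate_value_Icc' h hFc.continuousOn
        (Set.mem_Icc.2 ⟨le_of_lt hneg, le_of_lt hpos⟩)
      exact hcon t ⟨le_trans h₂.1 ht.1, le_trans ht.2 h₁.2⟩ htv
  have hfxp : f xp = f ((tx xp hxp : ℝ) : AddCircle (1:ℝ)) := by rw [htx2 xp hxp]
  rcases lt_trichotomy (f ((tx xp hxp : ℝ) : AddCircle (1:ℝ))) 0 with hs1 | hs1 | hs1
  · have hall : ∀ x ∈ s, f x ≤ 0 := by
      intro x hx
      rw [← htx2 x hx]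
      by_contra hgt
      push_neg at hgt
      exact hkey _ (htx1 xp hxp) _ (htx1 x hx) hs1 hgt
    have hpos' : 0 < ∑ x ∈ s, w x * (-(f x)) := by
      apply Finset.sum_pos'
      · intro x hx
        exact mul_nonneg (hw0 x hx) (by have := hall x hx; linarith)
      · exact ⟨xp, hxp, mul_pos hwxp (by rw [hfxp]; linarith)⟩
    have heq : ∑ x ∈ s, w x * (-(f x)) = -∑ x ∈ s, w x * f x := by
      rw [← Finset.sum_neg_distrib]
      exact Finset.sum_congr rfl (fun x _ => by ring)
    rw [heq, hsum, neg_zero] at hpos'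
    exact lt_irrefl 0 hpos'
  · exact hcon (tx xp hxp) (htx1 xp hxp) hs1
  · have hall : ∀ x ∈ s, 0 ≤ f x := by
      intro x hx
      rw [← htx2 x hx]
      by_contra hlt
      push_neg at hlt
      exact hkey _ (htx1 x hx) _ (htx1 xp hxp) hlt hs1
    have hpos' : 0 < ∑ x ∈ s, w x * f x := by
      apply Finset.sum_pos'
      · intro x hx
        exact mul_nonneg (hw0 x hx) (hall x hx)
      · exact ⟨xp, hxp, mul_pos hwxp (by rw [hfxp]; linarith)⟩
    rw [hsum] at hpos'
    exact lt_irrefl 0 hpos'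
end

section
/- Let n ≥ 1 be an integer and p ≥ 3 a prime. Let S ⊆ (ℤ_{≥0})^n \ {0} with |S| ≤ p^n/2 − 1, such that every α ∈ S has some coordinate not divisible by p. Then every multivariate trigonometric polynomial with spectrum S has a zero on every closed geodesic ball of radius r = sqrt((n−1)/4 + ((p−2)/(2p))²) in the flat torus (ℝ/ℤ)^n. -/
open Real

/-! Auxiliary definitions and lemmas -/

noncomputable def ee (x : ℝ) : ℂ := Complex.exp (2 * Real.pi * x * Complex.I)

lemma ee_add (x y : ℝ) : ee (x + y) = ee x * ee y := by
  rw [ee, ee, ee, ← Complex.exp_add]; congr 1; push_cast; ring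

lemma ee_int (k : ℤ) : ee k = 1 := by
  rw [ee, Complex.exp_eq_one_iff]; exact ⟨k, by push_cast; ring⟩

lemma ee_sub_int (x : ℝ) (k : ℤ) : ee (x - k) = ee x := by
  have : ee (x - k) * ee k = ee x := by rw [← ee_add]; norm_num
  rw [ee_int] at this; simpa using this

lemma ee_pow (x : ℝ) (k : ℕ) : ee x ^ k = ee (k * x) := by
  rw [ee, ee, ← Complex.exp_nat_mul]; congr 1; push_cast; ring

lemma ee_sum {ι : Type*} (s : Finset ι) (g : ι → ℝ) :
    ee (∑ j ∈ s, g j) = ∏ j ∈ s, ee (g j) := by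
  simp only [ee]
  rw [← Complex.exp_sum]
  congr 1
  push_cast
  rw [Finset.mul_sum, Finset.sum_mul]

lemma geom_ee {p : ℕ} (hp : 0 < p) {μ : ℤ} (h : ¬ (p:ℤ) ∣ μ) :
    ∑ k : Fin p, ee ((μ:ℝ) / p) ^ (k:ℕ) = 0 := by
  have hp' : (p:ℝ) ≠ 0 := Nat.cast_ne_zero.mpr hp.ne'
  have h1 : ee ((μ:ℝ)/p) ^ p = 1 := by
    rw [ee_pow, show (p:ℝ) * ((μ:ℝ)/p) = ((μ:ℤ) : ℝ) by field_simp]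
    exact ee_int μ
  have h2 : ee ((μ:ℝ)/p) ≠ 1 := by
    intro hone
    rw [ee, Complex.exp_eq_one_iff] at hone
    obtain ⟨m, hm⟩ := hone
    apply h
    refine ⟨m, ?_⟩
    have h2pi : (2 * (Real.pi:ℂ) * Complex.I) ≠ 0 := by
      simp [Real.pi_ne_zero, Complex.I_ne_zero]
    have hcc : ((((μ:ℝ)/p : ℝ)) : ℂ) = (m:ℂ) := by
      apply mul_left_cancel₀ h2pi
      rw [show 2 * (Real.pi:ℂ) * Complex.I * ((((μ:ℝ)/p : ℝ)) : ℂ)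
            = 2 * (Real.pi:ℂ) * ((((μ:ℝ)/p : ℝ)) : ℂ) * Complex.I by ring, hm]
      ring
    have hre : (μ:ℝ)/p = (m:ℝ) := by exact_mod_cast congrArg Complex.re hcc
    have : (μ:ℝ) = (p:ℝ) * m := by field_simp at hre; linarith
    exact_mod_cast this
  rw [Fin.sum_univ_eq_sum_range, geom_sum_eq h2, h1]
  simp

/-- signed representative of `x : Fin p` -/
noncomputable def sgn (p : ℕ) (x : Fin p) : ℝ :=
  if (x:ℕ) ≤ (p-1)/2 then (x:ℝ) else (x:ℝ) - p

lemma sgn_sub_int (p : ℕ) (x : Fin p) : ∃ k : ℤ, sgn p x = (x:ℕ) - (p:ℕ) * k := by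
  rw [sgn]
  split
  · exact ⟨0, by push_cast; ring⟩
  · exact ⟨1, by push_cast; ring⟩

lemma sgn_abs {p : ℕ} (hodd : Odd p) (hp : 0 < p) (x : Fin p) :
    |sgn p x| ≤ ((p:ℝ) - 1)/2 := by
  have hhalf : ((p-1)/2 : ℕ) = ((p:ℝ)-1)/2 := by
    obtain ⟨m, hm⟩ := hodd
    have h1 : (p-1)/2 = m := by omega
    rw [h1]
    have : (p:ℝ) = 2*m+1 := by exact_mod_cast congrArg (Nat.cast : ℕ → ℝ) hm
    rw [this]; ring
  rw [sgn]
  split_ifs with h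
  · rw [abs_of_nonneg (by positivity)]
    calc ((x:ℕ):ℝ) ≤ (((p-1)/2 : ℕ):ℝ) := by exact_mod_cast h
      _ = ((p:ℝ)-1)/2 := hhalf
  · push_neg at h
    have hx1 : ((p-1)/2 : ℕ) + 1 ≤ (x:ℕ) := h
    have hx2 : (x:ℕ) ≤ p - 1 := by omega
    have hx1' : ((p:ℝ)-1)/2 + 1 ≤ ((x:ℕ):ℝ) := by
      rw [← hhalf]; exact_mod_cast hx1
    have hx2' : ((x:ℕ):ℝ) ≤ (p:ℝ) - 1 := by
      have h2 : ((p-1 : ℕ):ℝ) = (p:ℝ) - 1 := by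
        have : 1 ≤ p := hp; push_cast [this]; ring
      rw [← h2]; exact_mod_cast hx2
    rw [abs_of_nonpos (by linarith)]
    linarith

lemma ee_sgn (p : ℕ) (hp : 0 < p) (lam : ℕ) (x : Fin p) :
    ee ((lam:ℝ) * sgn p x / p) = ee ((lam:ℝ)/p) ^ (x:ℕ) := by
  obtain ⟨k, hk⟩ := sgn_sub_int p x
  have hp' : (p:ℝ) ≠ 0 := Nat.cast_ne_zero.mpr hp.ne'
  rw [ee_pow, hk]
  rw [show (lam:ℝ) * (((x:ℕ):ℝ) - (p:ℕ)*k) / p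
      = ((x:ℕ):ℝ) * ((lam:ℝ)/p) - ((lam * k : ℤ):ℝ) by push_cast; field_simp]
  rw [ee_sub_int]

lemma grid_sum {n p : ℕ} (hp : 0 < p) (α : Fin n → ℕ) (j₀ : Fin n) (hj : ¬ p ∣ α j₀)
    (c : Fin n → ℝ) :
    ∑ k : Fin n → Fin p, ee (∑ j, (α j : ℝ) * (c j + sgn p (k j) / p)) = 0 := by
  have hterm : ∀ k : Fin n → Fin p,
      ee (∑ j, (α j : ℝ) * (c j + sgn p (k j) / p))
        = ee (∑ j, (α j : ℝ) * c j) * ∏ j, ee ((α j : ℝ)/p) ^ ((k j : ℕ)) := by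
    intro k
    rw [show (∑ j, (α j : ℝ) * (c j + sgn p (k j) / p))
        = (∑ j, (α j:ℝ) * c j) + ∑ j, (α j:ℝ) * sgn p (k j) / p by
          rw [← Finset.sum_add_distrib]; apply Finset.sum_congr rfl; intro j _; ring,
      ee_add]
    congr 1
    rw [ee_sum]
    exact Finset.prod_congr rfl fun j _ => ee_sgn p hp (α j) (k j)
  simp_rw [hterm]
  rw [← Finset.mul_sum]
  rw [show ∑ k : Fin n → Fin p, ∏ j, ee ((α j : ℝ)/p) ^ ((k j : ℕ))
      = ∏ j, ∑ x : Fin p, ee ((α j:ℝ)/p) ^ (x:ℕ)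
      from (Fintype.prod_sum (fun j (x : Fin p) => ee ((α j : ℝ)/p) ^ (x:ℕ))).symm]
  rw [Finset.prod_eq_zero (Finset.mem_univ j₀), mul_zero]
  have hj' : ¬ ((p:ℤ) ∣ ((α j₀ : ℕ):ℤ)) := by exact_mod_cast hj
  have := geom_ee hp hj'
  simpa using this

lemma ee_add_ee_neg (x : ℝ) : ee x + ee (-x) = 2 * ((Real.cos (2*π*x) : ℝ) : ℂ) := by
  rw [ee, ee,
    show (2 * (Real.pi:ℂ) * (x:ℂ) * Complex.I) = ((2*π*x : ℝ):ℂ) * Complex.I by push_cast; ring,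
    show (2 * (Real.pi:ℂ) * ((-x:ℝ):ℂ) * Complex.I) = (-((2*π*x : ℝ):ℂ)) * Complex.I by
      push_cast; ring,
    Complex.exp_mul_I, Complex.exp_mul_I, Complex.cos_neg, Complex.sin_neg,
    ← Complex.ofReal_cos, ← Complex.ofReal_sin]
  ring

lemma one_dim_sum {p : ℕ} (hp : 0 < p) (lam ρ : ℕ)
    (h1 : ¬ (p:ℤ) ∣ (lam:ℤ)) (h2 : ¬ (p:ℤ) ∣ ((lam:ℤ) + ρ)) (h3 : ¬ (p:ℤ) ∣ ((lam:ℤ) - ρ))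
    (C : ℂ) :
    ∑ k : Fin p, ((1 - Real.cos (2*π*((ρ:ℝ)*(k:ℕ)/p)) : ℝ) : ℂ)
      * (C * ee ((lam:ℝ)/p) ^ (k:ℕ)) = 0 := by
  have hw : ∀ k : Fin p, ((1 - Real.cos (2*π*((ρ:ℝ)*(k:ℕ)/p)) : ℝ) : ℂ)
      = 1 - (ee ((ρ:ℝ)/p)^(k:ℕ) + ee (-((ρ:ℝ)/p))^(k:ℕ))/2 := by
    intro k
    rw [ee_pow, ee_pow,
      show ((k:ℕ):ℝ) * ((ρ:ℝ)/p) = (ρ:ℝ)*(k:ℕ)/p by ring,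
      show ((k:ℕ):ℝ) * (-((ρ:ℝ)/p)) = -((ρ:ℝ)*(k:ℕ)/p) by ring,
      ee_add_ee_neg ((ρ:ℝ)*(k:ℕ)/p)]
    push_cast
    ring
  have e1 : ee ((((lam:ℤ) + ρ : ℤ):ℝ)/p) = ee ((lam:ℝ)/p) * ee ((ρ:ℝ)/p) := by
    rw [← ee_add]; congr 1; push_cast; ring
  have e2 : ee ((((lam:ℤ) - ρ : ℤ):ℝ)/p) = ee ((lam:ℝ)/p) * ee (-((ρ:ℝ)/p)) := by
    rw [← ee_add]; congr 1; push_cast; ring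
  have hsplit : ∀ k : Fin p, ((1 - Real.cos (2*π*((ρ:ℝ)*(k:ℕ)/p)) : ℝ) : ℂ)
        * (C * ee ((lam:ℝ)/p) ^ (k:ℕ))
      = C * ee ((lam:ℝ)/p)^(k:ℕ)
        - C/2 * ee ((((lam:ℤ) + ρ : ℤ):ℝ)/p)^(k:ℕ)
        - C/2 * ee ((((lam:ℤ) - ρ : ℤ):ℝ)/p)^(k:ℕ) := by
    intro k
    rw [hw k, e1, e2, mul_pow, mul_pow]
    ring
  simp_rw [hsplit]
  rw [Finset.sum_sub_distrib, Finset.sum_sub_distrib,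
    ← Finset.mul_sum, ← Finset.mul_sum, ← Finset.mul_sum]
  have g1 : ∑ k : Fin p, ee ((lam:ℝ)/p)^(k:ℕ) = 0 := by
    have := geom_ee hp h1; simpa using this
  have g2 := geom_ee hp h2
  have g3 := geom_ee hp h3
  rw [g1, g2, g3]
  ring

lemma re_term (a b x : ℝ) :
    (((a:ℂ) - (b:ℂ) * Complex.I) * ee x).re
      = a * Real.cos (2 * π * x) + b * Real.sin (2 * π * x) := by
  rw [ee,
    show (2 * (Real.pi:ℂ) * (x:ℂ) * Complex.I) = ((2*π*x : ℝ):ℂ) * Complex.I by push_cast; ring,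
    Complex.exp_mul_I, ← Complex.ofReal_cos, ← Complex.ofReal_sin]
  simp only [Complex.mul_re, Complex.add_re, Complex.add_im, Complex.sub_re, Complex.sub_im,
    Complex.ofReal_re, Complex.ofReal_im, Complex.mul_im, Complex.I_re, Complex.I_im]
  ring

lemma addCircle_dist_le (x y : ℝ) :
    dist ((x : AddCircle (1:ℝ))) ((y : AddCircle (1:ℝ))) ≤ |x - y| := by
  rw [dist_eq_norm, ← AddCircle.coe_sub, AddCircle.norm_eq]
  set d := x - y
  simp only [inv_one, one_mul, mul_one]
  rcases le_or_gt (1/2) |d| with h | h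
  · exact le_trans (abs_sub_round d) h
  · have hd := abs_lt.mp h
    have : round d = 0 := by
      rw [round_eq_zero_iff, Set.mem_Ico]
      constructor <;> [linarith [hd.1]; linarith [hd.2]]
    simp [this]

lemma skeleton {n : ℕ} {ι : Type*} [Fintype ι]
    (f : (Fin n → ℝ) → ℝ) (hf : Continuous f)
    (c : Fin n → ℝ) (R : ℝ) (hR : 0 ≤ R)
    (w : ι → ℝ) (y : ι → Fin n → ℝ)
    (hw : ∀ i, 0 ≤ w i)
    (hy : ∀ i, w i ≠ 0 → ∑ j, (y i j - c j)^2 ≤ R^2)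
    (hsum : ∑ i, w i * f (y i) = 0)
    (hex : ∃ i, w i ≠ 0)
    (q : (Fin n → ℝ) → PiLp 2 fun _ : Fin n => AddCircle (1:ℝ))
    (hq : ∀ t i, q t i = ((t i : ℝ) : AddCircle (1:ℝ)))
    (center : PiLp 2 fun _ : Fin n => AddCircle (1:ℝ))
    (hc : ∀ j, ((c j : ℝ) : AddCircle (1:ℝ)) = center j) :
    ∃ t : Fin n → ℝ, dist (q t) center ≤ R ∧ f t = 0 := by
  have key : ∀ t : Fin n → ℝ, (∑ j, (t j - c j)^2) ≤ R^2 → dist (q t) center ≤ R := by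
    intro t ht
    have h2 : (0:ℝ) < (2:ENNReal).toReal := by norm_num
    rw [PiLp.dist_eq_sum h2]
    have hstep : ∀ j, dist (q t j) (center j) ^ ((2:ENNReal).toReal) ≤ (t j - c j)^2 := by
      intro j
      have h1 : dist (q t j) (center j) ≤ |t j - c j| := by
        rw [hq, ← hc]; exact addCircle_dist_le _ _
      have h22 : ((2:ENNReal).toReal) = ((2:ℕ):ℝ) := by norm_num
      rw [h22, Real.rpow_natCast]
      calc dist (q t j) (center j) ^ (2:ℕ) ≤ |t j - c j| ^ (2:ℕ) :=
            pow_le_pow_left₀ dist_nonneg h1 2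
        _ = (t j - c j)^2 := sq_abs _
    have hsumle : ∑ j, dist (q t j) (center j) ^ ((2:ENNReal).toReal) ≤ R^2 :=
      le_trans (Finset.sum_le_sum fun j _ => hstep j) ht
    calc (∑ j, dist (q t j) (center j) ^ ((2:ENNReal).toReal)) ^ (1 / (2:ENNReal).toReal)
        = Real.sqrt (∑ j, dist (q t j) (center j) ^ ((2:ENNReal).toReal)) := by
          rw [Real.sqrt_eq_rpow]; norm_num
      _ ≤ Real.sqrt (R^2) := Real.sqrt_le_sqrt hsumle
      _ = R := Real.sqrt_sq hR
  have hsq : ∀ (i : ι) (u : ℝ), u ∈ Set.Icc (0:ℝ) 1 → w i ≠ 0 →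
      ∑ j, ((c j + u * (y i j - c j)) - c j)^2 ≤ R^2 := by
    intro i u hu hwi
    have h0 : ∀ j : Fin n, ((c j + u * (y i j - c j)) - c j)^2 = u^2 * (y i j - c j)^2 := by
      intro j; ring
    simp_rw [h0, ← Finset.mul_sum]
    have hnn : (0:ℝ) ≤ ∑ j, (y i j - c j)^2 := Finset.sum_nonneg fun j _ => sq_nonneg _
    have hu2 : u^2 ≤ 1 := by nlinarith [hu.1, hu.2]
    calc u^2 * ∑ j, (y i j - c j)^2 ≤ 1 * ∑ j, (y i j - c j)^2 :=
          mul_le_mul_of_nonneg_right hu2 hnn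
      _ = ∑ j, (y i j - c j)^2 := one_mul _
      _ ≤ R^2 := hy i hwi
  have hcball : dist (q c) center ≤ R := by
    apply key
    have h0 : ∀ j : Fin n, (c j - c j)^2 = 0 := by intro j; ring
    simp only [h0, Finset.sum_const, smul_zero]
    positivity
  rcases lt_trichotomy (f c) 0 with hfc | hfc | hfc
  · have hexi : ∃ i, w i ≠ 0 ∧ 0 ≤ f (y i) := by
      by_contra hcon
      push_neg at hcon
      obtain ⟨i₀, hi₀⟩ := hex
      have hlt : ∑ i, w i * f (y i) < ∑ _i : ι, (0:ℝ) := by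
        apply Finset.sum_lt_sum
        · intro i _
          rcases eq_or_ne (w i) 0 with h | h
          · simp [h]
          · exact le_of_lt (mul_neg_of_pos_of_neg ((hw i).lt_of_ne' h) (hcon i h))
        · exact ⟨i₀, Finset.mem_univ _,
            mul_neg_of_pos_of_neg ((hw i₀).lt_of_ne' hi₀) (hcon i₀ hi₀)⟩
      rw [hsum] at hlt
      simp at hlt
    obtain ⟨i, hwi, hfi⟩ := hexi
    set g : ℝ → ℝ := fun u => f (fun j => c j + u * (y i j - c j)) with hg
    have hgc : Continuous g := by
      apply hf.comp
      exact continuous_pi fun j => continuous_const.add (continuous_id.mul continuous_const)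
    have hy1 : (fun j => c j + 1 * (y i j - c j)) = y i := by funext j; ring
    have h0m : (0:ℝ) ∈ Set.Icc (g 0) (g 1) := by
      constructor
      · simp only [hg]; simpa using le_of_lt hfc
      · simp only [hg, hy1]; exact hfi
    obtain ⟨u, hu01, hu⟩ := intermediate_value_Icc zero_le_one hgc.continuousOn h0m
    exact ⟨fun j => c j + u * (y i j - c j), key _ (hsq i u hu01 hwi), hu⟩
  · exact ⟨c, hcball, hfc⟩
  · have hexi : ∃ i, w i ≠ 0 ∧ f (y i) ≤ 0 := by
      by_contra hcon
      push_neg at hcon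
      obtain ⟨i₀, hi₀⟩ := hex
      have hlt : ∑ _i : ι, (0:ℝ) < ∑ i, w i * f (y i) := by
        apply Finset.sum_lt_sum
        · intro i _
          rcases eq_or_ne (w i) 0 with h | h
          · simp [h]
          · exact le_of_lt (mul_pos ((hw i).lt_of_ne' h) (hcon i h))
        · exact ⟨i₀, Finset.mem_univ _, mul_pos ((hw i₀).lt_of_ne' hi₀) (hcon i₀ hi₀)⟩
      rw [hsum] at hlt
      simp at hlt
    obtain ⟨i, hwi, hfi⟩ := hexi
    set g : ℝ → ℝ := fun u => f (fun j => c j + u * (y i j - c j)) with hg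
    have hgc : Continuous g := by
      apply hf.comp
      exact continuous_pi fun j => continuous_const.add (continuous_id.mul continuous_const)
    have hy1 : (fun j => c j + 1 * (y i j - c j)) = y i := by funext j; ring
    have h0m : (0:ℝ) ∈ Set.Icc (g 1) (g 0) := by
      constructor
      · simp only [hg, hy1]; exact hfi
      · simp only [hg]; simpa using le_of_lt hfc
    obtain ⟨u, hu01, hu⟩ := intermediate_value_Icc' zero_le_one hgc.continuousOn h0m
    exact ⟨fun j => c j + u * (y i j - c j), key _ (hsq i u hu01 hwi), hu⟩

/-- Every multivariate trigonometric polynomial with spectrum `S` (with `|S| ≤ pⁿ/2 - 1`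
and every `α ∈ S` having a coordinate not divisible by `p`) has a zero on every closed
geodesic ball of radius `√((n-1)/4 + ((p-2)/(2p))²)` in the flat torus `(ℝ/ℤ)ⁿ`. -/
theorem multivariate_trig_zero (n p : ℕ) (hn : 1 ≤ n) (hp : p.Prime) (hp3 : 3 ≤ p)
    (S : Finset (Fin n → ℕ)) (hS0 : (0 : Fin n → ℕ) ∉ S)
    (hScard : (S.card : ℝ) ≤ (p : ℝ)^n / 2 - 1)
    (hSp : ∀ α ∈ S, ∃ i, ¬ p ∣ α i)
    (a b : (Fin n → ℕ) → ℝ) (hab : ∀ α ∈ S, (a α, b α) ≠ (0, 0))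
    (f : (Fin n → ℝ) → ℝ)
    (hf : ∀ t, f t = ∑ α ∈ S,
      (a α * Real.cos (2 * π * ∑ i, (α i : ℝ) * t i) +
       b α * Real.sin (2 * π * ∑ i, (α i : ℝ) * t i)))
    (q : (Fin n → ℝ) → PiLp 2 fun _ : Fin n => AddCircle (1:ℝ))
    (hq : ∀ t i, q t i = ((t i : ℝ) : AddCircle (1:ℝ)))
    (center : PiLp 2 fun _ : Fin n => AddCircle (1:ℝ)) :
    ∃ t : Fin n → ℝ,
      dist (q t) center ≤ Real.sqrt (((n:ℝ) - 1) / 4 + (((p:ℝ) - 2) / (2 * p))^2) ∧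
      f t = 0 := by
  haveI : Fact ((0:ℝ) < 1) := ⟨zero_lt_one⟩
  have hp0 : 0 < p := by omega
  have hppos : (0:ℝ) < p := by exact_mod_cast hp0
  have hp3' : (3:ℝ) ≤ p := by exact_mod_cast hp3
  have hn1 : (1:ℝ) ≤ n := by exact_mod_cast hn
  have hXnn : 0 ≤ ((n:ℝ) - 1) / 4 + (((p:ℝ) - 2) / (2 * p))^2 := by
    have h1 : 0 ≤ ((n:ℝ)-1)/4 := by linarith
    exact add_nonneg h1 (sq_nonneg _)
  have hRnn : 0 ≤ Real.sqrt (((n:ℝ) - 1) / 4 + (((p:ℝ) - 2) / (2 * p))^2) := Real.sqrt_nonneg _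
  have hR2 : (Real.sqrt (((n:ℝ) - 1) / 4 + (((p:ℝ) - 2) / (2 * p))^2))^2
      = ((n:ℝ) - 1) / 4 + (((p:ℝ) - 2) / (2 * p))^2 := Real.sq_sqrt hXnn
  -- lift of the center
  set c : Fin n → ℝ := fun j => ((AddCircle.equivIco 1 0 (center j) : Set.Ico (0:ℝ) (0+1)) : ℝ)
    with hcdef
  have hc : ∀ j, ((c j : ℝ) : AddCircle (1:ℝ)) = center j := by
    intro j
    exact (AddCircle.equivIco 1 0).symm_apply_apply (center j)
  -- complex description of f
  have hfC : ∀ t, f t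
      = (∑ α ∈ S, ((a α : ℂ) - (b α : ℂ) * Complex.I) * ee (∑ j, (α j : ℝ) * t j)).re := by
    intro t
    rw [hf t, Complex.re_sum]
    exact Finset.sum_congr rfl fun α _ => (re_term (a α) (b α) _).symm
  have hcont : Continuous f := by
    have hfx : f = fun t => ∑ α ∈ S,
        (a α * Real.cos (2 * π * ∑ i, (α i : ℝ) * t i) +
         b α * Real.sin (2 * π * ∑ i, (α i : ℝ) * t i)) := funext hf
    rw [hfx]
    apply continuous_finset_sum
    intro α _
    have hlin : Continuous fun t : Fin n → ℝ => 2 * π * ∑ i, (α i:ℝ) * t i :=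
      continuous_const.mul
        (continuous_finset_sum _ fun i _ => continuous_const.mul (continuous_apply i))
    exact (continuous_const.mul (Real.continuous_cos.comp hlin)).add
      (continuous_const.mul (Real.continuous_sin.comp hlin))
  rcases eq_or_lt_of_le hn with hone | h2
  · -- n = 1
    subst hone
    haveI : NeZero p := ⟨by omega⟩
    set A : Finset (ZMod p) :=
      insert 0 ((S.image fun α => ((α 0 : ℕ) : ZMod p)) ∪
        (S.image fun α => -((α 0 : ℕ) : ZMod p))) with hA
    have hAcard : A.card < p := by
      have h1 : A.card ≤ ((S.image fun α => ((α 0 : ℕ) : ZMod p))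
          ∪ (S.image fun α => -((α 0 : ℕ) : ZMod p))).card + 1 :=
        Finset.card_insert_le _ _
      have h2 := Finset.card_union_le (S.image fun α => ((α 0 : ℕ) : ZMod p))
        (S.image fun α => -((α 0 : ℕ) : ZMod p))
      have h3 : (S.image fun α => ((α 0 : ℕ) : ZMod p)).card ≤ S.card := Finset.card_image_le
      have h4 : (S.image fun α => -((α 0 : ℕ) : ZMod p)).card ≤ S.card := Finset.card_image_le
      have hcard2 : 2 * S.card + 2 ≤ p := by
        have hsc : (S.card : ℝ) ≤ (p:ℝ)/2 - 1 := by simpa using hScard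
        have : ((2 * S.card + 2 : ℕ) : ℝ) ≤ (p:ℝ) := by push_cast; linarith
        exact_mod_cast this
      have h5 : A.card ≤ S.card + S.card + 1 :=
        le_trans h1 (add_le_add_left (le_trans h2 (add_le_add h3 h4)) 1)
      calc A.card ≤ S.card + S.card + 1 := h5
        _ < p := by clear * - hcard2; omega
    have hexρ : ∃ x : ZMod p, x ∉ A := by
      by_contra hcon
      push_neg at hcon
      have hsub : Finset.univ ⊆ A := fun x _ => hcon x
      have := Finset.card_le_card hsub
      rw [Finset.card_univ, ZMod.card] at this
      omega
    obtain ⟨ρbar, hρbar⟩ := hexρ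
    have hρcast : ((ρbar.val : ℕ) : ZMod p) = ρbar := ZMod.natCast_zmod_val ρbar
    set ρ : ℕ := ρbar.val with hρdef
    have hρlt : ρ < p := ZMod.val_lt ρbar
    have hρne0 : ρbar ≠ 0 := by
      intro h
      exact hρbar (h ▸ Finset.mem_insert_self 0 _)
    have hρpos : 0 < ρ :=
      Nat.pos_of_ne_zero fun h => hρne0 (by rw [← hρcast, h, Nat.cast_zero])
    -- divisibility facts
    have hlam : ∀ α ∈ S, ¬ (p:ℤ) ∣ ((α 0 : ℕ):ℤ) := by
      intro α hα hdvd
      obtain ⟨i, hi⟩ := hSp α hα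
      have hi0 : i = 0 := Subsingleton.elim i 0
      rw [hi0] at hi
      exact hi (by exact_mod_cast hdvd)
    have hplus : ∀ α ∈ S, ¬ (p:ℤ) ∣ (((α 0:ℕ):ℤ) + ρ) := by
      intro α hα hdvd
      apply hρbar
      have h0 : (((((α 0:ℕ):ℤ) + ρ : ℤ)) : ZMod p) = 0 :=
        (ZMod.intCast_zmod_eq_zero_iff_dvd _ p).mpr hdvd
      push_cast at h0
      rw [hρcast] at h0
      have hmem : ρbar = -((α 0 : ℕ) : ZMod p) := by linear_combination h0
      rw [hA]
      apply Finset.mem_insert_of_mem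
      apply Finset.mem_union_right
      rw [hmem]
      exact Finset.mem_image_of_mem _ hα
    have hminus : ∀ α ∈ S, ¬ (p:ℤ) ∣ (((α 0:ℕ):ℤ) - ρ) := by
      intro α hα hdvd
      apply hρbar
      have h0 : (((((α 0:ℕ):ℤ) - ρ : ℤ)) : ZMod p) = 0 :=
        (ZMod.intCast_zmod_eq_zero_iff_dvd _ p).mpr hdvd
      push_cast at h0
      rw [hρcast] at h0
      have hmem : ρbar = ((α 0 : ℕ) : ZMod p) := by linear_combination -h0
      rw [hA]
      apply Finset.mem_insert_of_mem
      apply Finset.mem_union_left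
      rw [hmem]
      exact Finset.mem_image_of_mem _ hα
    -- apply the skeleton
    have h2pi0 : (2*π : ℝ) ≠ 0 := by positivity
    refine skeleton f hcont c _ hRnn
      (fun k : Fin p => 1 - Real.cos (2*π*((ρ:ℝ)*((k:ℕ):ℝ)/p)))
      (fun k => fun j => c j + (((k:ℕ):ℝ)/p - 1/2))
      (fun k => sub_nonneg.mpr (Real.cos_le_one _)) ?_ ?_ ?_ q hq center hc
    · -- metric bound
      intro k hk
      have hk0 : (k:ℕ) ≠ 0 := by
        intro h0
        apply hk
        simp [h0]
      have hk1 : (1:ℝ) ≤ ((k:ℕ):ℝ) := by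
        exact_mod_cast Nat.one_le_iff_ne_zero.mpr hk0
      have hkp : ((k:ℕ):ℝ) ≤ (p:ℝ) - 1 := by
        have hle : (k:ℕ) ≤ p - 1 := by have := k.isLt; omega
        calc ((k:ℕ):ℝ) ≤ ((p-1:ℕ):ℝ) := by exact_mod_cast hle
          _ = (p:ℝ)-1 := by
              rw [Nat.cast_sub hp0, Nat.cast_one]
      rw [Fin.sum_univ_one]
      have he : ((p:ℝ)-2)/(2*p) = 1/2 - 1/p := by field_simp
      have hk1p : (1:ℝ)/p ≤ ((k:ℕ):ℝ)/p := by gcongr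
      have hkpp : ((k:ℕ):ℝ)/p ≤ ((p:ℝ)-1)/p := by gcongr
      have hp1p : ((p:ℝ)-1)/p = 1 - 1/p := by field_simp
      have hδ : |(c 0 + (((k:ℕ):ℝ)/p - 1/2)) - c 0| ≤ ((p:ℝ)-2)/(2*p) := by
        rw [show (c 0 + (((k:ℕ):ℝ)/p - 1/2)) - c 0 = ((k:ℕ):ℝ)/p - 1/2 by ring, abs_le, he]
        constructor
        · rw [hp1p] at hkpp
          linarith
        · rw [hp1p] at hkpp
          linarith
      calc ((c 0 + (((k:ℕ):ℝ)/p - 1/2)) - c 0)^2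
          = |(c 0 + (((k:ℕ):ℝ)/p - 1/2)) - c 0|^2 := (sq_abs _).symm
        _ ≤ (((p:ℝ)-2)/(2*p))^2 := pow_le_pow_left₀ (abs_nonneg _) hδ 2
        _ = (Real.sqrt ((((1:ℕ):ℝ) - 1) / 4 + (((p:ℝ) - 2) / (2 * p))^2))^2 := by
            rw [hR2]
            norm_num
    · -- the weighted sum vanishes
      have hstep : ∀ k : Fin p, f (fun j => c j + (((k:ℕ):ℝ)/p - 1/2))
          = (∑ α ∈ S, ((a α : ℂ) - (b α : ℂ) * Complex.I)
              * (ee ((α 0:ℝ) * (c 0 - 1/2)) * ee (((α 0 : ℕ):ℝ)/p) ^ (k:ℕ))).re := by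
        intro k
        rw [hfC]
        congr 1
        apply Finset.sum_congr rfl
        intro α _
        congr 1
        rw [Fin.sum_univ_one, ee_pow, ← ee_add]
        congr 1
        field_simp
        ring
      simp_rw [hstep]
      have hre : ∀ (r : ℝ) (z : ℂ), r * z.re = ((r:ℂ) * z).re :=
        fun r z => (Complex.re_ofReal_mul r z).symm
      simp_rw [hre]
      rw [← Complex.re_sum]
      have hzero : (∑ k : Fin p, ((1 - Real.cos (2*π*((ρ:ℝ)*((k:ℕ):ℝ)/p)) : ℝ) : ℂ)
          * (∑ α ∈ S, ((a α : ℂ) - (b α : ℂ) * Complex.I)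
            * (ee ((α 0:ℝ) * (c 0 - 1/2)) * ee (((α 0 : ℕ):ℝ)/p) ^ (k:ℕ)))) = 0 := by
        simp_rw [Finset.mul_sum]
        rw [Finset.sum_comm]
        apply Finset.sum_eq_zero
        intro α hα
        have hrw : ∀ k : Fin p, ((1 - Real.cos (2*π*((ρ:ℝ)*((k:ℕ):ℝ)/p)) : ℝ) : ℂ)
            * (((a α : ℂ) - (b α : ℂ) * Complex.I)
              * (ee ((α 0:ℝ) * (c 0 - 1/2)) * ee (((α 0 : ℕ):ℝ)/p) ^ (k:ℕ)))
            = ((1 - Real.cos (2*π*((ρ:ℝ)*((k:ℕ):ℝ)/p)) : ℝ) : ℂ)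
            * ((((a α : ℂ) - (b α : ℂ) * Complex.I) * ee ((α 0:ℝ) * (c 0 - 1/2)))
              * ee (((α 0 : ℕ):ℝ)/p) ^ (k:ℕ)) := by
          intro k; ring
        simp_rw [hrw]
        exact one_dim_sum hp0 (α 0) ρ (hlam α hα) (hplus α hα) (hminus α hα) _
      rw [hzero, Complex.zero_re]
    · -- a nonzero weight exists
      refine ⟨⟨1, by omega⟩, ?_⟩
      intro hzero
      have hzero' : 1 - Real.cos (2*π*((ρ:ℝ)*((1:ℕ):ℝ)/p)) = 0 := hzero
      have hcos : Real.cos (2*π*((ρ:ℝ)*((1:ℕ):ℝ)/p)) = 1 := by linarith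
      rw [Real.cos_eq_one_iff] at hcos
      obtain ⟨m, hm⟩ := hcos
      have hx : (m:ℝ) = (ρ:ℝ)*((1:ℕ):ℝ)/p := by
        apply mul_left_cancel₀ h2pi0
        rw [show (2*π:ℝ) * m = (m:ℝ) * (2*π) by ring, hm]
      have hfrac1 : (0:ℝ) < (ρ:ℝ)*((1:ℕ):ℝ)/p := by
        have : (0:ℝ) < (ρ:ℝ) := by exact_mod_cast hρpos
        simp only [Nat.cast_one, mul_one]
        positivity
      have hfrac2 : (ρ:ℝ)*((1:ℕ):ℝ)/p < 1 := by
        simp only [Nat.cast_one, mul_one]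
        rw [div_lt_one hppos]
        exact_mod_cast hρlt
      rw [← hx] at hfrac1 hfrac2
      have h1 : (0:ℤ) < m := by exact_mod_cast hfrac1
      have h2' : m < 1 := by exact_mod_cast hfrac2
      omega
  · -- n ≥ 2
    have hn2 : (2:ℝ) ≤ (n:ℝ) := by exact_mod_cast h2
    have hodd : Odd p := hp.odd_of_ne_two (by omega)
    refine skeleton f hcont c _ hRnn (fun _ : Fin n → Fin p => 1)
      (fun k => fun j => c j + sgn p (k j) / p) (fun _ => zero_le_one) ?_ ?_
      ⟨fun _ => ⟨0, hp0⟩, one_ne_zero⟩ q hq center hc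
    · -- metric bound
      intro k _
      have hterm : ∀ j : Fin n, ((c j + sgn p (k j)/p) - c j)^2 ≤ (((p:ℝ)-1)/(2*p))^2 := by
        intro j
        have hs := sgn_abs hodd hp0 (k j)
        have habs : |(c j + sgn p (k j)/p) - c j| ≤ ((p:ℝ)-1)/(2*p) := by
          rw [show (c j + sgn p (k j)/p) - c j = sgn p (k j)/p by ring, abs_div,
            abs_of_pos hppos, show ((p:ℝ)-1)/(2*p) = (((p:ℝ)-1)/2)/p by ring]
          gcongr
        calc ((c j + sgn p (k j)/p) - c j)^2 = |(c j + sgn p (k j)/p) - c j|^2 :=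
              (sq_abs _).symm
          _ ≤ (((p:ℝ)-1)/(2*p))^2 := pow_le_pow_left₀ (abs_nonneg _) habs 2
      calc ∑ j : Fin n, ((c j + sgn p (k j)/p) - c j)^2
          ≤ ∑ _j : Fin n, (((p:ℝ)-1)/(2*p))^2 := Finset.sum_le_sum fun j _ => hterm j
        _ = (n:ℝ) * (((p:ℝ)-1)/(2*p))^2 := by
            rw [Finset.sum_const, Finset.card_univ, Fintype.card_fin, nsmul_eq_mul]
        _ ≤ ((n:ℝ) - 1) / 4 + (((p:ℝ) - 2) / (2 * p))^2 := by
            have hkey : (n:ℝ)*((p:ℝ)-1)^2 ≤ ((n:ℝ)-1)*(p:ℝ)^2 + ((p:ℝ)-2)^2 := by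
              nlinarith [mul_nonneg (by linarith : (0:ℝ) ≤ (n:ℝ)-2)
                (by linarith : (0:ℝ) ≤ (p:ℝ)-3)]
            have expand : ((n:ℝ)-1)/4 + (((p:ℝ)-2)/(2*p))^2 - (n:ℝ)*(((p:ℝ)-1)/(2*p))^2
                = (((n:ℝ)-1)*(p:ℝ)^2 + ((p:ℝ)-2)^2 - (n:ℝ)*((p:ℝ)-1)^2)/(4*(p:ℝ)^2) := by
              field_simp
              ring
            have : 0 ≤ ((n:ℝ)-1)/4 + (((p:ℝ)-2)/(2*p))^2 - (n:ℝ)*(((p:ℝ)-1)/(2*p))^2 := by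
              rw [expand]
              apply div_nonneg (by linarith) (by positivity)
            linarith
        _ = (Real.sqrt (((n:ℝ) - 1) / 4 + (((p:ℝ) - 2) / (2 * p))^2))^2 := hR2.symm
    · -- the weighted (weight 1) sum vanishes
      simp only [one_mul]
      have hstep : ∀ k : Fin n → Fin p, f (fun j => c j + sgn p (k j)/p)
          = (∑ α ∈ S, ((a α : ℂ) - (b α : ℂ) * Complex.I)
              * ee (∑ j, (α j : ℝ) * (c j + sgn p (k j)/p))).re := fun k => hfC _
      simp_rw [hstep]
      rw [← Complex.re_sum]
      rw [Finset.sum_comm]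
      have hz0 : ∀ α ∈ S,
          ∑ k : Fin n → Fin p, ((a α : ℂ) - (b α : ℂ) * Complex.I)
            * ee (∑ j, (α j : ℝ) * (c j + sgn p (k j)/p)) = 0 := by
        intro α hα
        obtain ⟨j₀, hj₀⟩ := hSp α hα
        rw [← Finset.mul_sum, grid_sum hp0 α j₀ hj₀ c, mul_zero]
      rw [Finset.sum_congr rfl hz0, Finset.sum_const_zero, Complex.zero_re]
end
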